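/- arXiv:1705.00836 — 5 statements merged into one kernel-verified Lean document; each statement's English description precedes it below -/
import Mathlib

section
/- Let m ≥ 1, let n_1 < n'_1 ≤ n_2 < n'_2 be integers, and let E ⊂ [n_1, n'_2] be a finite set of distinct points such that #(E ∩ (i, j)) ≥ 2(j−i) − 1 for all integers n_1 ≤ i < j ≤ n'_2. Suppose E = E_1 ⊔ E_2 is a partition with #(E_l ∩ [n_l, n'_l]) ≥ n'_l − n_l + m for l = 1, 2. Then there exist integers i_1 < i'_1 = i_2 < i'_2 in [n_1, n'_2] such that E_l ∩ [i_l, i'_l] is a sampling set for V_m|_{[i_l, i'_l]} for l = 1, 2. -/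
open Set

/-- Integer-valued count of the points of a finite set lying in `s`. -/
noncomputable def icnt (A : Finset ℝ) (s : Set ℝ) : ℤ := (((A : Set ℝ) ∩ s).ncard : ℤ)

lemma icnt_fin (A : Finset ℝ) (s : Set ℝ) : ((A : Set ℝ) ∩ s).Finite :=
  A.finite_toSet.inter_of_left s

lemma icnt_nonneg (A : Finset ℝ) (s : Set ℝ) : 0 ≤ icnt A s := Int.natCast_nonneg _

lemma icnt_mono (A : Finset ℝ) {s t : Set ℝ} (h : s ⊆ t) : icnt A s ≤ icnt A t := by
  unfold icnt
  exact_mod_cast Set.ncard_le_ncard (Set.inter_subset_inter_right _ h) (icnt_fin A t)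

lemma icnt_union (A : Finset ℝ) {s t : Set ℝ} (h : Disjoint s t) :
    icnt A (s ∪ t) = icnt A s + icnt A t := by
  unfold icnt
  rw [Set.inter_union_distrib_left,
    Set.ncard_union_eq (h.mono Set.inter_subset_right Set.inter_subset_right)
      (icnt_fin A s) (icnt_fin A t)]
  push_cast; ring

lemma icnt_le_card (A B : Finset ℝ) (h : (A : Set ℝ) ⊆ (B : Finset ℝ)) (s : Set ℝ) :
    icnt A s ≤ (B.card : ℤ) := by
  have h2 : ((A : Set ℝ) ∩ s).ncard ≤ ((B : Finset ℝ) : Set ℝ).ncard :=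
    Set.ncard_le_ncard (le_trans Set.inter_subset_left h) B.finite_toSet
  rw [Set.ncard_coe_finset] at h2
  unfold icnt
  exact_mod_cast h2

lemma icnt_singleton_le (A : Finset ℝ) (x : ℝ) : icnt A {x} ≤ 1 := by
  have h2 : ((A : Set ℝ) ∩ {x}).ncard ≤ ({x} : Set ℝ).ncard :=
    Set.ncard_le_ncard Set.inter_subset_right (Set.finite_singleton x)
  rw [Set.ncard_singleton] at h2
  unfold icnt
  exact_mod_cast h2

lemma icnt_Icc_self_le (A : Finset ℝ) (x : ℝ) : icnt A (Icc x x) ≤ 1 := by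
  rw [Set.Icc_self]; exact icnt_singleton_le A x

lemma icnt_split_Icc_Ioc (A : Finset ℝ) {a b c : ℝ} (h1 : a ≤ b) (h2 : b ≤ c) :
    icnt A (Icc a c) = icnt A (Icc a b) + icnt A (Ioc b c) := by
  rw [← Set.Icc_union_Ioc_eq_Icc h1 h2,
    icnt_union A (Set.disjoint_left.mpr fun x hx hy => absurd hx.2 (not_le.mpr hy.1))]

lemma icnt_split_Ico_Icc (A : Finset ℝ) {a b c : ℝ} (h1 : a ≤ b) (h2 : b ≤ c) :
    icnt A (Icc a c) = icnt A (Ico a b) + icnt A (Icc b c) := by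
  rw [← Set.Ico_union_Icc_eq_Icc h1 h2,
    icnt_union A (Set.disjoint_left.mpr fun x hx hy => absurd hy.1 (not_le.mpr hx.2))]

lemma icnt_split_Ioo_Icc (A : Finset ℝ) {a b c : ℝ} (h1 : a < b) (h2 : b ≤ c) :
    icnt A (Ioc a c) = icnt A (Ioo a b) + icnt A (Icc b c) := by
  rw [← Set.Ioo_union_Icc_eq_Ioc h1 h2,
    icnt_union A (Set.disjoint_left.mpr fun x hx hy => absurd hy.1 (not_le.mpr hx.2))]

lemma icnt_Ico_le (A : Finset ℝ) {a b : ℝ} (h : a < b) :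
    icnt A (Ico a b) ≤ 1 + icnt A (Ioo a b) := by
  have hd : Disjoint ({a} : Set ℝ) (Ioo a b) := by
    rw [Set.disjoint_left]
    rintro x hx hy
    rw [Set.mem_singleton_iff] at hx
    subst hx
    exact lt_irrefl _ hy.1
  have he : Ico a b = ({a} : Set ℝ) ∪ Ioo a b := by
    rw [← Set.Ioo_insert_left h, Set.insert_eq]
  rw [he, icnt_union A hd]
  have := icnt_singleton_le A a
  linarith

lemma icnt_Ioc_le (A : Finset ℝ) {a b : ℝ} (h : a < b) :
    icnt A (Ioc a b) ≤ icnt A (Ioo a b) + 1 := by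
  have hd : Disjoint (Ioo a b) ({b} : Set ℝ) := by
    rw [Set.disjoint_left]
    rintro x hx hy
    rw [Set.mem_singleton_iff] at hy
    subst hy
    exact lt_irrefl _ hx.2
  have he : Ioc a b = Ioo a b ∪ ({b} : Set ℝ) := by
    rw [← Set.Ioo_insert_right h, Set.insert_eq, Set.union_comm]
  rw [he, icnt_union A hd]
  have := icnt_singleton_le A b
  linarith

/-- A "good triple": `E₁` has surplus `m` on `[x,y]` and `E₂` has surplus `m` on `[y,z]`. -/
def st13Good (m n₁ n₂' : ℤ) (E₁ E₂ : Finset ℝ) (x y z : ℤ) : Prop :=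
  n₁ ≤ x ∧ x < y ∧ y < z ∧ z ≤ n₂' ∧
    y - x + m ≤ icnt E₁ (Icc (x : ℝ) (y : ℝ)) ∧
    z - y + m ≤ icnt E₂ (Icc (y : ℝ) (z : ℝ))

/-- Potential to be minimized over good triples. -/
noncomputable def st13Phi (K : ℤ) (E₁ E₂ : Finset ℝ) (x y z : ℤ) : ℤ :=
  K * (z - x) - icnt E₁ (Icc (x : ℝ) (y : ℝ)) - icnt E₂ (Icc (y : ℝ) (z : ℝ))

/-- Schönberg–Whitney characterization of (local) sampling sets for the spline space
`V_m|_{[a,b]}`, taken as the definition. -/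
def IsSamplingSet (m a b : ℤ) (F : Set ℝ) : Prop :=
  (b - a + m ≤ (F.ncard : ℤ)) ∧
  (∀ k : ℤ, 0 ≤ k → k ≤ b - a → k ≤ ((F ∩ Set.Ico (a : ℝ) ((a : ℝ) + k)).ncard : ℤ)) ∧
  (∀ k : ℤ, 0 ≤ k → k ≤ b - a → k ≤ ((F ∩ Set.Ioc ((b : ℝ) - k) (b : ℝ)).ncard : ℤ)) ∧
  (∀ c d : ℤ, a ≤ c → c < d → d ≤ b →
    d - c - m ≤ ((F ∩ Set.Ioo (c : ℝ) (d : ℝ)).ncard : ℤ))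

/-- from a dense enough point set split into two parts, each rich on its
own interval, one can find two adjacent integer intervals (sharing one endpoint) on
which the respective parts are sampling sets. -/
theorem stmt_13 (m : ℕ) (hm : 1 ≤ m) (n₁ n₁' n₂ n₂' : ℤ)
    (h₁ : n₁ < n₁') (h₁₂ : n₁' ≤ n₂) (h₂ : n₂ < n₂')
    (E E₁ E₂ : Finset ℝ) (hE : (E : Set ℝ) ⊆ Set.Icc (n₁ : ℝ) (n₂' : ℝ))
    (hdense : ∀ i j : ℤ, n₁ ≤ i → i < j → j ≤ n₂' →
      2 * (j - i) - 1 ≤ (((E : Set ℝ) ∩ Set.Ioo (i : ℝ) (j : ℝ)).ncard : ℤ))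
    (hunion : E₁ ∪ E₂ = E) (hdisj : Disjoint E₁ E₂)
    (hrich₁ : n₁' - n₁ + m ≤ (((E₁ : Set ℝ) ∩ Set.Icc (n₁ : ℝ) (n₁' : ℝ)).ncard : ℤ))
    (hrich₂ : n₂' - n₂ + m ≤ (((E₂ : Set ℝ) ∩ Set.Icc (n₂ : ℝ) (n₂' : ℝ)).ncard : ℤ)) :
    ∃ i₁ i₂ i₃ : ℤ, n₁ ≤ i₁ ∧ i₁ < i₂ ∧ i₂ < i₃ ∧ i₃ ≤ n₂' ∧
      IsSamplingSet m i₁ i₂ ((E₁ : Set ℝ) ∩ Set.Icc (i₁ : ℝ) (i₂ : ℝ)) ∧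
      IsSamplingSet m i₂ i₃ ((E₂ : Set ℝ) ∩ Set.Icc (i₂ : ℝ) (i₃ : ℝ)) := by
  classical
  have hm1 : (1 : ℤ) ≤ (m : ℤ) := by exact_mod_cast hm
  have hEeq : (E : Set ℝ) = (E₁ : Set ℝ) ∪ (E₂ : Set ℝ) := by
    rw [← hunion, Finset.coe_union]
  have hdisj' : Disjoint (E₁ : Set ℝ) (E₂ : Set ℝ) := Finset.disjoint_coe.mpr hdisj
  have hEsub1 : (E₁ : Set ℝ) ⊆ (E : Finset ℝ) := by rw [hEeq]; exact Set.subset_union_left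
  have hEsub2 : (E₂ : Set ℝ) ⊆ (E : Finset ℝ) := by rw [hEeq]; exact Set.subset_union_right
  have hsplit : ∀ s : Set ℝ, icnt E s = icnt E₁ s + icnt E₂ s := by
    intro s
    unfold icnt
    rw [hEeq, Set.union_inter_distrib_right,
      Set.ncard_union_eq (hdisj'.mono Set.inter_subset_left Set.inter_subset_left)
        (icnt_fin E₁ s) (icnt_fin E₂ s)]
    push_cast; ring
  -- density in icnt form
  have hden : ∀ i j : ℤ, n₁ ≤ i → i < j → j ≤ n₂' →
      2 * (j - i) - 1 ≤ icnt E₁ (Ioo (i : ℝ) (j : ℝ)) + icnt E₂ (Ioo (i : ℝ) (j : ℝ)) := by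
    intro i j hij1 hij2 hij3
    have h0 := hdense i j hij1 hij2 hij3
    have h1 : icnt E (Ioo (i : ℝ) (j : ℝ)) = icnt E₁ (Ioo (i : ℝ) (j : ℝ)) + icnt E₂ (Ioo (i : ℝ) (j : ℝ)) :=
      hsplit _
    have h2 : 2 * (j - i) - 1 ≤ icnt E (Ioo (i : ℝ) (j : ℝ)) := h0
    linarith
  have hr1 : n₁' - n₁ + (m : ℤ) ≤ icnt E₁ (Icc (n₁ : ℝ) (n₁' : ℝ)) := hrich₁
  have hr2 : n₂' - n₂ + (m : ℤ) ≤ icnt E₂ (Icc (n₂ : ℝ) (n₂' : ℝ)) := hrich₂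
  -- Step A : existence of a good triple
  have hGoodEx : ∃ x y z : ℤ, st13Good (m : ℤ) n₁ n₂' E₁ E₂ x y z := by
    -- greatest t ≤ n₂ with an E₁-surplus interval ending at t
    obtain ⟨t, ⟨ht1, ht2, s, hs1, hs2, hs3⟩, htmax⟩ :=
      Int.exists_greatest_of_bdd (P := fun t => n₁' ≤ t ∧ t ≤ n₂ ∧
          ∃ s : ℤ, n₁ ≤ s ∧ s < t ∧ t - s + (m : ℤ) ≤ icnt E₁ (Icc (s : ℝ) (t : ℝ)))
        ⟨n₂, fun z hz => hz.2.1⟩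
        ⟨n₁', le_refl _, h₁₂, n₁, le_refl _, h₁, hr1⟩
    by_cases hcase : t = n₂
    · subst hcase
      exact ⟨s, t, n₂', hs1, hs2, h₂, le_refl _, hs3, hr2⟩
    · have htlt : t < n₂ := lt_of_le_of_ne ht2 hcase
      -- E₁ is sparse on (t, n₂]
      have hsparse : icnt E₁ (Ioc (t : ℝ) (n₂ : ℝ)) ≤ (n₂ - t) - 1 := by
        by_contra hcon
        push_neg at hcon
        have hsp : icnt E₁ (Icc (s : ℝ) (n₂ : ℝ)) =
            icnt E₁ (Icc (s : ℝ) (t : ℝ)) + icnt E₁ (Ioc (t : ℝ) (n₂ : ℝ)) :=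
          icnt_split_Icc_Ioc E₁ (by exact_mod_cast hs2.le) (by exact_mod_cast htlt.le)
        have hP : n₁' ≤ n₂ ∧ n₂ ≤ n₂ ∧ ∃ s' : ℤ, n₁ ≤ s' ∧ s' < n₂ ∧
            n₂ - s' + (m : ℤ) ≤ icnt E₁ (Icc (s' : ℝ) (n₂ : ℝ)) :=
          ⟨h₁₂, le_refl _, s, hs1, hs2.trans htlt, by linarith⟩
        have := htmax n₂ hP
        omega
      have hd := hden t n₂ (by linarith) htlt h₂.le
      have h1o : icnt E₁ (Ioo (t : ℝ) (n₂ : ℝ)) ≤ icnt E₁ (Ioc (t : ℝ) (n₂ : ℝ)) :=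
        icnt_mono E₁ Set.Ioo_subset_Ioc_self
      have hsp2 : icnt E₂ (Ioc (t : ℝ) (n₂' : ℝ)) =
          icnt E₂ (Ioo (t : ℝ) (n₂ : ℝ)) + icnt E₂ (Icc (n₂ : ℝ) (n₂' : ℝ)) :=
        icnt_split_Ioo_Icc E₂ (by exact_mod_cast htlt) (by exact_mod_cast h₂.le)
      have hsub : icnt E₂ (Ioc (t : ℝ) (n₂' : ℝ)) ≤ icnt E₂ (Icc (t : ℝ) (n₂' : ℝ)) :=
        icnt_mono E₂ Set.Ioc_subset_Icc_self
      exact ⟨s, t, n₂', hs1, hs2, by linarith, le_refl _, hs3, by linarith⟩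
  -- Step B : minimize the potential over good triples
  set K : ℤ := 2 * (E.card : ℤ) + 1 with hK
  have hK0 : 0 ≤ K := by positivity
  obtain ⟨x0, y0, z0, hg0⟩ := hGoodEx
  have hbdd : ∀ v : ℤ, (∃ x y z : ℤ, st13Good (m : ℤ) n₁ n₂' E₁ E₂ x y z ∧
      v = st13Phi K E₁ E₂ x y z) → 2 * K - 2 * (E.card : ℤ) ≤ v := by
    rintro v ⟨x, y, z, hg, rfl⟩
    obtain ⟨hgx, hgxy, hgyz, hgz, hgc1, hgc2⟩ := hg
    have b1 : icnt E₁ (Icc (x : ℝ) (y : ℝ)) ≤ (E.card : ℤ) := icnt_le_card E₁ E hEsub1 _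
    have b2 : icnt E₂ (Icc (y : ℝ) (z : ℝ)) ≤ (E.card : ℤ) := icnt_le_card E₂ E hEsub2 _
    have hzx : 2 ≤ z - x := by omega
    have : K * 2 ≤ K * (z - x) := by
      apply mul_le_mul_of_nonneg_left hzx hK0
    unfold st13Phi
    linarith
  obtain ⟨v, ⟨x, y, z, hg, hv⟩, hvmin⟩ :=
    Int.exists_least_of_bdd (P := fun v => ∃ x y z : ℤ,
      st13Good (m : ℤ) n₁ n₂' E₁ E₂ x y z ∧ v = st13Phi K E₁ E₂ x y z)
      ⟨2 * K - 2 * (E.card : ℤ), hbdd⟩ ⟨st13Phi K E₁ E₂ x0 y0 z0, x0, y0, z0, hg0, rfl⟩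
  obtain ⟨hx, hxy, hyz, hz, hc1, hc2⟩ := hg
  have hmin : ∀ x' y' z' : ℤ, st13Good (m : ℤ) n₁ n₂' E₁ E₂ x' y' z' →
      st13Phi K E₁ E₂ x y z ≤ st13Phi K E₁ E₂ x' y' z' := by
    intro x' y' z' hg'
    rw [← hv]
    exact hvmin _ ⟨x', y', z', hg', rfl⟩
  -- no good triple with strictly smaller span
  have hspan : ∀ x' y' z' : ℤ, st13Good (m : ℤ) n₁ n₂' E₁ E₂ x' y' z' →
      z' - x' < z - x → False := by
    intro x' y' z' hg' hlt
    have h1 := hmin x' y' z' hg'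
    have b1 : icnt E₁ (Icc (x : ℝ) (y : ℝ)) ≤ (E.card : ℤ) := icnt_le_card E₁ E hEsub1 _
    have b2 : icnt E₂ (Icc (y : ℝ) (z : ℝ)) ≤ (E.card : ℤ) := icnt_le_card E₂ E hEsub2 _
    have b3 : 0 ≤ icnt E₁ (Icc (x' : ℝ) (y' : ℝ)) := icnt_nonneg _ _
    have b4 : 0 ≤ icnt E₂ (Icc (y' : ℝ) (z' : ℝ)) := icnt_nonneg _ _
    have hle : z' - x' ≤ z - x - 1 := by omega
    have : K * (z' - x') ≤ K * (z - x - 1) := mul_le_mul_of_nonneg_left hle hK0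
    unfold st13Phi at h1
    have hKval : K = 2 * (E.card : ℤ) + 1 := hK
    nlinarith
  -- no good triple with the same span and strictly larger count-sum
  have hsame : ∀ x' y' z' : ℤ, st13Good (m : ℤ) n₁ n₂' E₁ E₂ x' y' z' →
      z' - x' = z - x →
      icnt E₁ (Icc (x : ℝ) (y : ℝ)) + icnt E₂ (Icc (y : ℝ) (z : ℝ)) + 1 ≤
        icnt E₁ (Icc (x' : ℝ) (y' : ℝ)) + icnt E₂ (Icc (y' : ℝ) (z' : ℝ)) → False := by
    intro x' y' z' hg' heq hcnt
    have h1 := hmin x' y' z' hg'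
    unfold st13Phi at h1
    rw [heq] at h1
    linarith
  -- (Fb) prefix condition for E₁
  have hFb : ∀ k : ℤ, 1 ≤ k → k ≤ y - x → k ≤ icnt E₁ (Ico (x : ℝ) ((x + k : ℤ) : ℝ)) := by
    intro k hk1 hk2
    by_contra hcon
    push_neg at hcon
    have hsplit1 : icnt E₁ (Icc (x : ℝ) (y : ℝ)) =
        icnt E₁ (Ico (x : ℝ) ((x + k : ℤ) : ℝ)) + icnt E₁ (Icc ((x + k : ℤ) : ℝ) (y : ℝ)) :=
      icnt_split_Ico_Icc E₁ (by exact_mod_cast (by omega : x ≤ x + k))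
        (by exact_mod_cast (by omega : x + k ≤ y))
    rcases eq_or_lt_of_le hk2 with heq | hlt
    · have hxk : x + k = y := by omega
      rw [hxk] at hsplit1 hcon
      have hsing := icnt_Icc_self_le E₁ (y : ℝ)
      linarith
    · exact hspan (x + k) y z
        ⟨by omega, by omega, hyz, hz, by linarith, hc2⟩ (by omega)
  -- (Fc) suffix condition for E₁
  have hFc : ∀ k : ℤ, 1 ≤ k → k ≤ y - x → k ≤ icnt E₁ (Ioc ((y - k : ℤ) : ℝ) (y : ℝ)) := by
    intro k hk1 hk2
    by_contra hcon
    push_neg at hcon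
    have hsplit1 : icnt E₁ (Icc (x : ℝ) (y : ℝ)) =
        icnt E₁ (Icc (x : ℝ) ((y - k : ℤ) : ℝ)) + icnt E₁ (Ioc ((y - k : ℤ) : ℝ) (y : ℝ)) :=
      icnt_split_Icc_Ioc E₁ (by exact_mod_cast (by omega : x ≤ y - k))
        (by exact_mod_cast (by omega : y - k ≤ y))
    rcases eq_or_lt_of_le hk2 with heq | hlt
    · have hxk : y - k = x := by omega
      rw [hxk] at hsplit1 hcon
      have hsing := icnt_Icc_self_le E₁ (x : ℝ)
      linarith
    · -- bridge : E₂ is dense on (y-k, y)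
      have hbr := hden (y - k) y (by omega) (by omega) (by omega)
      have hm1' : icnt E₁ (Ioo ((y - k : ℤ) : ℝ) (y : ℝ)) ≤ icnt E₁ (Ioc ((y - k : ℤ) : ℝ) (y : ℝ)) :=
        icnt_mono E₁ Set.Ioo_subset_Ioc_self
      have h2a : icnt E₂ (Icc ((y - k : ℤ) : ℝ) (z : ℝ)) =
          icnt E₂ (Ico ((y - k : ℤ) : ℝ) (y : ℝ)) + icnt E₂ (Icc (y : ℝ) (z : ℝ)) :=
        icnt_split_Ico_Icc E₂ (by exact_mod_cast (by omega : y - k ≤ y))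
          (by exact_mod_cast hyz.le)
      have hm2' : icnt E₂ (Ioo ((y - k : ℤ) : ℝ) (y : ℝ)) ≤ icnt E₂ (Ico ((y - k : ℤ) : ℝ) (y : ℝ)) :=
        icnt_mono E₂ Set.Ioo_subset_Ico_self
      exact hsame x (y - k) z
        ⟨hx, by omega, by omega, hz, by linarith, by linarith⟩
        (by ring) (by linarith)
  -- (Fb2) prefix condition for E₂
  have hFb2 : ∀ k : ℤ, 1 ≤ k → k ≤ z - y → k ≤ icnt E₂ (Ico (y : ℝ) ((y + k : ℤ) : ℝ)) := by
    intro k hk1 hk2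
    by_contra hcon
    push_neg at hcon
    have hsplit1 : icnt E₂ (Icc (y : ℝ) (z : ℝ)) =
        icnt E₂ (Ico (y : ℝ) ((y + k : ℤ) : ℝ)) + icnt E₂ (Icc ((y + k : ℤ) : ℝ) (z : ℝ)) :=
      icnt_split_Ico_Icc E₂ (by exact_mod_cast (by omega : y ≤ y + k))
        (by exact_mod_cast (by omega : y + k ≤ z))
    rcases eq_or_lt_of_le hk2 with heq | hlt
    · have hxk : y + k = z := by omega
      rw [hxk] at hsplit1 hcon
      have hsing := icnt_Icc_self_le E₂ (z : ℝ)
      linarith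
    · have hbr := hden y (y + k) (by omega) (by omega) (by omega)
      have hm2' : icnt E₂ (Ioo (y : ℝ) ((y + k : ℤ) : ℝ)) ≤ icnt E₂ (Ico (y : ℝ) ((y + k : ℤ) : ℝ)) :=
        icnt_mono E₂ Set.Ioo_subset_Ico_self
      have h1a : icnt E₁ (Icc (x : ℝ) ((y + k : ℤ) : ℝ)) =
          icnt E₁ (Icc (x : ℝ) (y : ℝ)) + icnt E₁ (Ioc (y : ℝ) ((y + k : ℤ) : ℝ)) :=
        icnt_split_Icc_Ioc E₁ (by exact_mod_cast hxy.le)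
          (by exact_mod_cast (by omega : y ≤ y + k))
      have hm1' : icnt E₁ (Ioo (y : ℝ) ((y + k : ℤ) : ℝ)) ≤ icnt E₁ (Ioc (y : ℝ) ((y + k : ℤ) : ℝ)) :=
        icnt_mono E₁ Set.Ioo_subset_Ioc_self
      exact hsame x (y + k) z
        ⟨hx, by omega, by omega, hz, by linarith, by linarith⟩
        (by ring) (by linarith)
  -- (Fc2) suffix condition for E₂
  have hFc2 : ∀ k : ℤ, 1 ≤ k → k ≤ z - y → k ≤ icnt E₂ (Ioc ((z - k : ℤ) : ℝ) (z : ℝ)) := by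
    intro k hk1 hk2
    by_contra hcon
    push_neg at hcon
    have hsplit1 : icnt E₂ (Icc (y : ℝ) (z : ℝ)) =
        icnt E₂ (Icc (y : ℝ) ((z - k : ℤ) : ℝ)) + icnt E₂ (Ioc ((z - k : ℤ) : ℝ) (z : ℝ)) :=
      icnt_split_Icc_Ioc E₂ (by exact_mod_cast (by omega : y ≤ z - k))
        (by exact_mod_cast (by omega : z - k ≤ z))
    rcases eq_or_lt_of_le hk2 with heq | hlt
    · have hxk : z - k = y := by omega
      rw [hxk] at hsplit1 hcon
      have hsing := icnt_Icc_self_le E₂ (y : ℝ)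
      linarith
    · exact hspan x y (z - k)
        ⟨hx, hxy, by omega, by omega, hc1, by linarith⟩ (by omega)
  -- (star1) no E₁-surplus interval strictly inside on the left part
  have hstar1 : ∀ s : ℤ, x < s → s < y →
      icnt E₁ (Icc (s : ℝ) (y : ℝ)) ≤ y - s + (m : ℤ) - 1 := by
    intro s hs1 hs2
    by_contra hcon
    push_neg at hcon
    exact hspan s y z ⟨by omega, hs2, hyz, hz, by linarith, hc2⟩ (by omega)
  have hstar2 : ∀ u : ℤ, y < u → u < z →
      icnt E₂ (Icc (y : ℝ) (u : ℝ)) ≤ u - y + (m : ℤ) - 1 := by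
    intro u hu1 hu2
    by_contra hcon
    push_neg at hcon
    exact hspan x y u ⟨hx, hxy, hu1, by omega, hc1, by linarith⟩ (by omega)
  -- (Fd1) interior condition for E₁
  have hFd1 : ∀ c d : ℤ, x ≤ c → c < d → d ≤ y →
      d - c - (m : ℤ) ≤ icnt E₁ (Ioo (c : ℝ) (d : ℝ)) := by
    intro c d hcx hcd hdy
    by_contra hcon
    push_neg at hcon
    have hcon' : icnt E₁ (Ioo (c : ℝ) (d : ℝ)) ≤ d - c - (m : ℤ) - 1 := by omega
    -- c > x
    have hcgt : x < c := by
      rcases eq_or_lt_of_le hcx with heq | hlt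
      · exfalso
        have hb := hFb (d - x) (by omega) (by omega)
        have hcast : ((x + (d - x) : ℤ) : ℝ) = ((d : ℤ) : ℝ) := by push_cast; ring
        rw [hcast] at hb
        have hico := icnt_Ico_le E₁ (show (x : ℝ) < (d : ℝ) by exact_mod_cast (by omega : x < d))
        have hxc : (x : ℝ) = (c : ℝ) := by exact_mod_cast heq
        rw [← hxc] at hcon'
        linarith
      · exact hlt
    -- density gives an E₂-heavy interval
    have hbr := hden c d (by omega) hcd (by omega)
    have hmono2 : icnt E₂ (Ioo (c : ℝ) (d : ℝ)) ≤ icnt E₂ (Icc (c : ℝ) (d : ℝ)) :=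
      icnt_mono E₂ Set.Ioo_subset_Icc_self
    have h2heavy : d - c + (m : ℤ) ≤ icnt E₂ (Icc (c : ℝ) (d : ℝ)) := by linarith
    -- split E₁ count
    have hs1' : icnt E₁ (Icc (x : ℝ) (y : ℝ)) =
        icnt E₁ (Icc (x : ℝ) (c : ℝ)) + icnt E₁ (Ioc (c : ℝ) (y : ℝ)) :=
      icnt_split_Icc_Ioc E₁ (by exact_mod_cast hcx) (by exact_mod_cast (by omega : c ≤ y))
    have hs2' : icnt E₁ (Ioc (c : ℝ) (y : ℝ)) =
        icnt E₁ (Ioo (c : ℝ) (d : ℝ)) + icnt E₁ (Icc (d : ℝ) (y : ℝ)) :=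
      icnt_split_Ioo_Icc E₁ (by exact_mod_cast hcd) (by exact_mod_cast hdy)
    have htail : icnt E₁ (Icc (d : ℝ) (y : ℝ)) ≤ y - d + (m : ℤ) := by
      rcases eq_or_lt_of_le hdy with heq | hlt
      · have hdy' : (d : ℝ) = (y : ℝ) := by exact_mod_cast heq
        rw [hdy']
        have := icnt_Icc_self_le E₁ (y : ℝ)
        linarith
      · have := hstar1 d (by omega) hlt
        linarith
    have hhead : c - x + (m : ℤ) ≤ icnt E₁ (Icc (x : ℝ) (c : ℝ)) := by linarith
    exact hspan x c d ⟨hx, hcgt, hcd, by omega, hhead, h2heavy⟩ (by omega)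
  -- (Fd2) interior condition for E₂
  have hFd2 : ∀ c d : ℤ, y ≤ c → c < d → d ≤ z →
      d - c - (m : ℤ) ≤ icnt E₂ (Ioo (c : ℝ) (d : ℝ)) := by
    intro c d hcy hcd hdz
    by_contra hcon
    push_neg at hcon
    have hcon' : icnt E₂ (Ioo (c : ℝ) (d : ℝ)) ≤ d - c - (m : ℤ) - 1 := by omega
    -- d < z
    have hdlt : d < z := by
      rcases eq_or_lt_of_le hdz with heq | hlt
      · exfalso
        have hb := hFc2 (z - c) (by omega) (by omega)
        have hcast : ((z - (z - c) : ℤ) : ℝ) = ((c : ℤ) : ℝ) := by push_cast; ring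
        rw [hcast] at hb
        have hioc := icnt_Ioc_le E₂ (show (c : ℝ) < (z : ℝ) by exact_mod_cast (by omega : c < z))
        have hdz' : (d : ℝ) = (z : ℝ) := by exact_mod_cast heq
        rw [hdz'] at hcon'
        linarith
      · exact hlt
    have hbr := hden c d (by omega) hcd (by omega)
    have hmono1 : icnt E₁ (Ioo (c : ℝ) (d : ℝ)) ≤ icnt E₁ (Icc (c : ℝ) (d : ℝ)) :=
      icnt_mono E₁ Set.Ioo_subset_Icc_self
    have h1heavy : d - c + (m : ℤ) ≤ icnt E₁ (Icc (c : ℝ) (d : ℝ)) := by linarith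
    have hs1' : icnt E₂ (Icc (y : ℝ) (z : ℝ)) =
        icnt E₂ (Icc (y : ℝ) (c : ℝ)) + icnt E₂ (Ioc (c : ℝ) (z : ℝ)) :=
      icnt_split_Icc_Ioc E₂ (by exact_mod_cast hcy) (by exact_mod_cast (by omega : c ≤ z))
    have hs2' : icnt E₂ (Ioc (c : ℝ) (z : ℝ)) =
        icnt E₂ (Ioo (c : ℝ) (d : ℝ)) + icnt E₂ (Icc (d : ℝ) (z : ℝ)) :=
      icnt_split_Ioo_Icc E₂ (by exact_mod_cast hcd) (by exact_mod_cast (by omega : d ≤ z))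
    have hhead : icnt E₂ (Icc (y : ℝ) (c : ℝ)) ≤ c - y + (m : ℤ) := by
      rcases eq_or_lt_of_le hcy with heq | hlt
      · have hyc : (y : ℝ) = (c : ℝ) := by exact_mod_cast heq
        rw [← hyc]
        have := icnt_Icc_self_le E₂ (y : ℝ)
        linarith
      · have := hstar2 c hlt (by omega)
        linarith
    have htail : z - d + (m : ℤ) ≤ icnt E₂ (Icc (d : ℝ) (z : ℝ)) := by linarith
    exact hspan c d z ⟨by omega, hcd, hdlt, hz, h1heavy, htail⟩ (by omega)
  -- Assemble the answer
  refine ⟨x, y, z, hx, hxy, hyz, hz, ⟨hc1, ?_, ?_, ?_⟩, ⟨hc2, ?_, ?_, ?_⟩⟩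
  · -- E₁ prefix
    intro k hk0 hky
    rcases eq_or_lt_of_le hk0 with heq | hlt
    · rw [← heq]
      exact Int.natCast_nonneg _
    · have hb := hFb k hlt hky
      have hseq : ((E₁ : Set ℝ) ∩ Icc (x : ℝ) (y : ℝ)) ∩ Ico (x : ℝ) ((x : ℝ) + (k : ℝ)) =
          (E₁ : Set ℝ) ∩ Ico (x : ℝ) ((x : ℝ) + (k : ℝ)) := by
        rw [Set.inter_assoc]
        congr 1
        apply Set.inter_eq_self_of_subset_right
        intro w hw
        refine ⟨hw.1, ?_⟩
        have hky' : (x : ℝ) + (k : ℝ) ≤ (y : ℝ) := by exact_mod_cast (by omega : x + k ≤ y)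
        exact le_trans hw.2.le hky'
      rw [hseq]
      have hcast : ((x : ℝ) + (k : ℝ)) = (((x + k : ℤ)) : ℝ) := by push_cast; ring
      rw [hcast]
      exact hb
  · -- E₁ suffix
    intro k hk0 hky
    rcases eq_or_lt_of_le hk0 with heq | hlt
    · rw [← heq]
      exact Int.natCast_nonneg _
    · have hb := hFc k hlt hky
      have hseq : ((E₁ : Set ℝ) ∩ Icc (x : ℝ) (y : ℝ)) ∩ Ioc ((y : ℝ) - (k : ℝ)) (y : ℝ) =
          (E₁ : Set ℝ) ∩ Ioc ((y : ℝ) - (k : ℝ)) (y : ℝ) := by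
        rw [Set.inter_assoc]
        congr 1
        apply Set.inter_eq_self_of_subset_right
        intro w hw
        refine ⟨?_, hw.2⟩
        have hky' : (x : ℝ) ≤ (y : ℝ) - (k : ℝ) := by
          have : (x : ℝ) ≤ (((y - k : ℤ)) : ℝ) := by exact_mod_cast (by omega : x ≤ y - k)
          push_cast at this
          linarith
        exact le_trans hky' hw.1.le
      rw [hseq]
      have hcast : ((y : ℝ) - (k : ℝ)) = (((y - k : ℤ)) : ℝ) := by push_cast; ring
      rw [hcast]
      exact hb
  · -- E₁ interior
    intro c d hcx hcd hdy
    have hb := hFd1 c d hcx hcd hdy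
    have hseq : ((E₁ : Set ℝ) ∩ Icc (x : ℝ) (y : ℝ)) ∩ Ioo (c : ℝ) (d : ℝ) =
        (E₁ : Set ℝ) ∩ Ioo (c : ℝ) (d : ℝ) := by
      rw [Set.inter_assoc]
      congr 1
      apply Set.inter_eq_self_of_subset_right
      intro w hw
      constructor
      · have : (x : ℝ) ≤ (c : ℝ) := by exact_mod_cast hcx
        exact le_trans this hw.1.le
      · have : (d : ℝ) ≤ (y : ℝ) := by exact_mod_cast hdy
        exact le_trans hw.2.le this
    rw [hseq]
    exact hb
  · -- E₂ prefix
    intro k hk0 hky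
    rcases eq_or_lt_of_le hk0 with heq | hlt
    · rw [← heq]
      exact Int.natCast_nonneg _
    · have hb := hFb2 k hlt hky
      have hseq : ((E₂ : Set ℝ) ∩ Icc (y : ℝ) (z : ℝ)) ∩ Ico (y : ℝ) ((y : ℝ) + (k : ℝ)) =
          (E₂ : Set ℝ) ∩ Ico (y : ℝ) ((y : ℝ) + (k : ℝ)) := by
        rw [Set.inter_assoc]
        congr 1
        apply Set.inter_eq_self_of_subset_right
        intro w hw
        refine ⟨hw.1, ?_⟩
        have hky' : (y : ℝ) + (k : ℝ) ≤ (z : ℝ) := by exact_mod_cast (by omega : y + k ≤ z)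
        exact le_trans hw.2.le hky'
      rw [hseq]
      have hcast : ((y : ℝ) + (k : ℝ)) = (((y + k : ℤ)) : ℝ) := by push_cast; ring
      rw [hcast]
      exact hb
  · -- E₂ suffix
    intro k hk0 hky
    rcases eq_or_lt_of_le hk0 with heq | hlt
    · rw [← heq]
      exact Int.natCast_nonneg _
    · have hb := hFc2 k hlt hky
      have hseq : ((E₂ : Set ℝ) ∩ Icc (y : ℝ) (z : ℝ)) ∩ Ioc ((z : ℝ) - (k : ℝ)) (z : ℝ) =
          (E₂ : Set ℝ) ∩ Ioc ((z : ℝ) - (k : ℝ)) (z : ℝ) := by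
        rw [Set.inter_assoc]
        congr 1
        apply Set.inter_eq_self_of_subset_right
        intro w hw
        refine ⟨?_, hw.2⟩
        have hky' : (y : ℝ) ≤ (z : ℝ) - (k : ℝ) := by
          have : (y : ℝ) ≤ (((z - k : ℤ)) : ℝ) := by exact_mod_cast (by omega : y ≤ z - k)
          push_cast at this
          linarith
        exact le_trans hky' hw.1.le
      rw [hseq]
      have hcast : ((z : ℝ) - (k : ℝ)) = (((z - k : ℤ)) : ℝ) := by push_cast; ring
      rw [hcast]
      exact hb
  · -- E₂ interior
    intro c d hcy hcd hdz
    have hb := hFd2 c d hcy hcd hdz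
    have hseq : ((E₂ : Set ℝ) ∩ Icc (y : ℝ) (z : ℝ)) ∩ Ioo (c : ℝ) (d : ℝ) =
        (E₂ : Set ℝ) ∩ Ioo (c : ℝ) (d : ℝ) := by
      rw [Set.inter_assoc]
      congr 1
      apply Set.inter_eq_self_of_subset_right
      intro w hw
      constructor
      · have : (y : ℝ) ≤ (c : ℝ) := by exact_mod_cast hcy
        exact le_trans this hw.1.le
      · have : (d : ℝ) ≤ (z : ℝ) := by exact_mod_cast hdz
        exact le_trans hw.2.le this
    rw [hseq]
    exact hb
end

section
/- Let E ⊂ [N_1, N_2] satisfy the local phaseless sampling conditions: #E ≥ 2(N_2−N_1+m)−1; #(E∩[N_1, N_1+k)) ≥ 2k+m−1 and #(E∩(N_2−k, N_2]) ≥ 2k+m−1 for 1 ≤ k ≤ N_2−N_1; and #(E∩(n_1,n_2)) ≥ 2(n_2−n_1)−1 for all integers N_1 ≤ n_1 < n_2 ≤ N_2. Suppose E = E_1 ⊔ E_2 with #E_1 ≤ #E_2 and E_2 is not a sampling set for V_m|_{[N_1,N_2]}. Then there exist integers i_1 < i'_1 and i_2 < i'_2 in [N_1, N_2] with [i_1,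 i'_1] ∩ [i_2, i'_2] a single point, such that E_l ∩ [i_l, i'_l] is a sampling set for V_m|_{[i_l,i'_l]} for l = 1, 2. -/
open Set

noncomputable def cnt (F : Finset ℝ) (S : Set ℝ) : ℤ := (((F : Set ℝ) ∩ S).ncard : ℤ)

lemma cnt_nonneg (F : Finset ℝ) (S : Set ℝ) : 0 ≤ cnt F S := Int.ofNat_nonneg _

lemma cnt_mono (F : Finset ℝ) {S T : Set ℝ} (h : S ⊆ T) : cnt F S ≤ cnt F T := by
  unfold cnt
  have := Set.ncard_le_ncard (Set.inter_subset_inter_right (F : Set ℝ) h)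
    (F.finite_toSet.inter_of_left _)
  exact_mod_cast this

lemma cnt_union_eq (F : Finset ℝ) {S T : Set ℝ} (h : Disjoint S T) :
    cnt F (S ∪ T) = cnt F S + cnt F T := by
  unfold cnt
  have hd : Disjoint ((F : Set ℝ) ∩ S) ((F : Set ℝ) ∩ T) := h.mono inf_le_right inf_le_right
  have he : (F : Set ℝ) ∩ (S ∪ T) = ((F : Set ℝ) ∩ S) ∪ ((F : Set ℝ) ∩ T) :=
    Set.inter_union_distrib_left _ _ _
  rw [he, Set.ncard_union_eq hd (F.finite_toSet.inter_of_left _) (F.finite_toSet.inter_of_left _)]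
  push_cast; ring

lemma cnt_two_le (F : Finset ℝ) {S T W : Set ℝ} (hd : Disjoint S T) (hsub : S ∪ T ⊆ W) :
    cnt F S + cnt F T ≤ cnt F W := by
  rw [← cnt_union_eq F hd]; exact cnt_mono F hsub

lemma cnt_le_two (F : Finset ℝ) {S T W : Set ℝ} (hsub : W ⊆ S ∪ T) :
    cnt F W ≤ cnt F S + cnt F T := by
  calc cnt F W ≤ cnt F (S ∪ T) := cnt_mono F hsub
    _ ≤ cnt F S + cnt F T := by
        unfold cnt
        have he : (F : Set ℝ) ∩ (S ∪ T) = ((F : Set ℝ) ∩ S) ∪ ((F : Set ℝ) ∩ T) :=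
          Set.inter_union_distrib_left _ _ _
        rw [he]
        have := Set.ncard_union_le ((F : Set ℝ) ∩ S) ((F : Set ℝ) ∩ T)
        exact_mod_cast this

lemma cnt_three_le (F : Finset ℝ) {S T U W : Set ℝ} (h1 : Disjoint S T)
    (h2 : Disjoint (S ∪ T) U) (hsub : S ∪ T ∪ U ⊆ W) :
    cnt F S + cnt F T + cnt F U ≤ cnt F W := by
  rw [← cnt_union_eq F h1, ← cnt_union_eq F h2]; exact cnt_mono F hsub

lemma cnt_le_three (F : Finset ℝ) {S T U W : Set ℝ} (hsub : W ⊆ S ∪ T ∪ U) :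
    cnt F W ≤ cnt F S + cnt F T + cnt F U := by
  calc cnt F W ≤ cnt F (S ∪ T) + cnt F U := cnt_le_two F hsub
    _ ≤ cnt F S + cnt F T + cnt F U := by have := cnt_le_two F (le_refl (S ∪ T)); linarith

lemma cnt_singleton_le (F : Finset ℝ) (x : ℝ) : cnt F {x} ≤ 1 := by
  unfold cnt
  have : ((F : Set ℝ) ∩ {x}).ncard ≤ ({x} : Set ℝ).ncard :=
    Set.ncard_le_ncard inter_subset_right (Set.finite_singleton x)
  simp only [Set.ncard_singleton] at this
  exact_mod_cast this

lemma cnt_Icc_self_le (F : Finset ℝ) (x : ℝ) : cnt F (Icc x x) ≤ 1 := by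
  rw [Set.Icc_self]; exact cnt_singleton_le F x

lemma cnt_empty (F : Finset ℝ) {S : Set ℝ} (h : S = ∅) : cnt F S = 0 := by
  unfold cnt; rw [h]; simp

-- restriction
lemma inter_restrict {A B W : Set ℝ} (h : W ⊆ B) : (A ∩ B) ∩ W = A ∩ W := by
  rw [Set.inter_assoc, Set.inter_eq_right.2 h]

-- ## interval helpers
lemma disj_lt {S T : Set ℝ} {t : ℝ} (h1 : ∀ x ∈ S, x < t) (h2 : ∀ x ∈ T, t ≤ x) :
    Disjoint S T := by
  rw [Set.disjoint_left]; intro x hx hx'; exact absurd (h1 x hx) (not_lt.2 (h2 x hx'))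

lemma disj_le {S T : Set ℝ} {t : ℝ} (h1 : ∀ x ∈ S, x ≤ t) (h2 : ∀ x ∈ T, t < x) :
    Disjoint S T := by
  rw [Set.disjoint_left]; intro x hx hx'; exact absurd (h2 x hx') (not_lt.2 (h1 x hx))

lemma sub_Ico_Icc {a a' y b : ℝ} (ha : a ≤ a') (h : y ≤ b) : Ico a' y ⊆ Icc a b :=
  fun x hx => ⟨le_trans ha hx.1, le_trans (le_of_lt hx.2) h⟩
lemma sub_Ioc_Icc {a x b b' : ℝ} (h : a ≤ x) (hb : b' ≤ b) : Ioc x b' ⊆ Icc a b :=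
  fun z hz => ⟨le_trans h (le_of_lt hz.1), le_trans hz.2 hb⟩
lemma sub_Ioo_Icc {a x y b : ℝ} (h1 : a ≤ x) (h2 : y ≤ b) : Ioo x y ⊆ Icc a b :=
  fun z hz => ⟨le_trans h1 (le_of_lt hz.1), le_trans (le_of_lt hz.2) h2⟩
lemma sub_Icc_Ico {a a' d y : ℝ} (ha : a ≤ a') (h : d < y) : Icc a' d ⊆ Ico a y :=
  fun z hz => ⟨le_trans ha hz.1, lt_of_le_of_lt hz.2 h⟩
lemma sub_Icc_Icc {a a' d b : ℝ} (ha : a ≤ a') (h : d ≤ b) : Icc a' d ⊆ Icc a b :=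
  fun z hz => ⟨le_trans ha hz.1, le_trans hz.2 h⟩
lemma sub_Ioo_Ico' {a a' y y' : ℝ} (ha : a ≤ a') (hy : y ≤ y') : Ioo a' y ⊆ Ico a y' :=
  fun z hz => ⟨le_trans ha (le_of_lt hz.1), lt_of_lt_of_le hz.2 hy⟩
lemma sub_Ioo_Ioc' {a y y' : ℝ} (hy : y ≤ y') : Ioo a y ⊆ Ioc a y' :=
  fun z hz => ⟨hz.1, le_trans (le_of_lt hz.2) hy⟩
lemma sub_Ioc_Ioo {a x d y : ℝ} (ha : a ≤ x) (h : d < y) : Ioc x d ⊆ Ioo a y :=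
  fun z hz => ⟨lt_of_le_of_lt ha hz.1, lt_of_le_of_lt hz.2 h⟩
lemma sub_Ioo_Ioo {a a' y y' : ℝ} (ha : a ≤ a') (hy : y ≤ y') : Ioo a' y ⊆ Ioo a y' :=
  fun z hz => ⟨lt_of_le_of_lt ha hz.1, lt_of_lt_of_le hz.2 hy⟩
lemma sub_Ico_Ioo {a x y b : ℝ} (h1 : a < x) (h2 : y ≤ b) : Ico x y ⊆ Ioo a b :=
  fun z hz => ⟨lt_of_lt_of_le h1 hz.1, lt_of_lt_of_le hz.2 h2⟩

lemma cov_Icc_Ico_Icc {a b c : ℝ} : Icc a c ⊆ Ico a b ∪ Icc b c := by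
  intro x hx; rcases lt_or_ge x b with h | h
  · exact Or.inl ⟨hx.1, h⟩
  · exact Or.inr ⟨h, hx.2⟩
lemma cov_Icc_Icc_Ioc {a b c : ℝ} : Icc a c ⊆ Icc a b ∪ Ioc b c := by
  intro x hx; rcases le_or_gt x b with h | h
  · exact Or.inl ⟨hx.1, h⟩
  · exact Or.inr ⟨h, hx.2⟩
lemma cov_Icc3 {a b c d : ℝ} : Icc a d ⊆ Icc a b ∪ Ioo b c ∪ Icc c d := by
  intro x hx; rcases le_or_gt x b with h | h
  · exact Or.inl (Or.inl ⟨hx.1, h⟩)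
  · rcases lt_or_ge x c with h' | h'
    · exact Or.inl (Or.inr ⟨h, h'⟩)
    · exact Or.inr ⟨h', hx.2⟩
lemma cov_Ioo_Ioo_Ico {a b c : ℝ} : Ioo a c ⊆ Ioo a b ∪ Ico b c := by
  intro x hx; rcases lt_or_ge x b with h | h
  · exact Or.inl ⟨hx.1, h⟩
  · exact Or.inr ⟨h, hx.2⟩
lemma cov_Ico_Ico_Ico {a b c : ℝ} : Ico a c ⊆ Ico a b ∪ Ico b c := by
  intro x hx; rcases lt_or_ge x b with h | h
  · exact Or.inl ⟨hx.1, h⟩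
  · exact Or.inr ⟨h, hx.2⟩
lemma cov_Icc_Ico_s {a b : ℝ} : Icc a b ⊆ Ico a b ∪ {b} := by
  intro x hx; rcases lt_or_ge x b with h | h
  · exact Or.inl ⟨hx.1, h⟩
  · exact Or.inr (le_antisymm hx.2 h)
lemma cov_Icc_s_Ioc {a b : ℝ} : Icc a b ⊆ {a} ∪ Ioc a b := by
  intro x hx; rcases le_or_gt x a with h | h
  · exact Or.inl (le_antisymm h hx.1)
  · exact Or.inr ⟨h, hx.2⟩
lemma cov_Ioo_Ioc_Ioo {a b c : ℝ} : Ioo a c ⊆ Ioc a b ∪ Ioo b c := by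
  intro x hx; rcases le_or_gt x b with h | h
  · exact Or.inl ⟨hx.1, h⟩
  · exact Or.inr ⟨h, hx.2⟩
lemma cov_Ioo3 {a b c d : ℝ} : Ioo a d ⊆ Ioo a b ∪ Icc b c ∪ Ioo c d := by
  intro x hx; rcases lt_or_ge x b with h | h
  · exact Or.inl (Or.inl ⟨hx.1, h⟩)
  · rcases le_or_gt x c with h' | h'
    · exact Or.inl (Or.inr ⟨h, h'⟩)
    · exact Or.inr ⟨h', hx.2⟩

-- ## IsSamplingSet wrappers
lemma ISS_card' {m a b : ℤ} {F : Finset ℝ}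
    (h : IsSamplingSet m a b ((F : Set ℝ) ∩ Icc (a : ℝ) (b : ℝ))) :
    b - a + m ≤ cnt F (Icc (a : ℝ) (b : ℝ)) := h.1

lemma ISS_left' {m a b : ℤ} {F : Finset ℝ} (hab : a ≤ b)
    (h : IsSamplingSet m a b ((F : Set ℝ) ∩ Icc (a : ℝ) (b : ℝ))) :
    ∀ y : ℤ, a < y → y ≤ b → y - a ≤ cnt F (Ico (a : ℝ) (y : ℝ)) := by
  intro y h1 h2
  have hk := h.2.1 (y - a) (by omega) (by omega)
  have hw : (a : ℝ) + ((y - a : ℤ) : ℝ) = (y : ℝ) := by push_cast; ring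
  rw [hw] at hk
  have hsub : Ico (a : ℝ) (y : ℝ) ⊆ Icc (a : ℝ) (b : ℝ) :=
    sub_Ico_Icc le_rfl (by exact_mod_cast h2)
  rwa [inter_restrict hsub] at hk

lemma ISS_right' {m a b : ℤ} {F : Finset ℝ} (hab : a ≤ b)
    (h : IsSamplingSet m a b ((F : Set ℝ) ∩ Icc (a : ℝ) (b : ℝ))) :
    ∀ x : ℤ, a ≤ x → x < b → b - x ≤ cnt F (Ioc (x : ℝ) (b : ℝ)) := by
  intro x h1 h2
  have hk := h.2.2.1 (b - x) (by omega) (by omega)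
  have hw : (b : ℝ) - ((b - x : ℤ) : ℝ) = (x : ℝ) := by push_cast; ring
  rw [hw] at hk
  have hsub : Ioc (x : ℝ) (b : ℝ) ⊆ Icc (a : ℝ) (b : ℝ) :=
    sub_Ioc_Icc (by exact_mod_cast h1) le_rfl
  rwa [inter_restrict hsub] at hk

lemma ISS_mid' {m a b : ℤ} {F : Finset ℝ}
    (h : IsSamplingSet m a b ((F : Set ℝ) ∩ Icc (a : ℝ) (b : ℝ))) :
    ∀ x y : ℤ, a ≤ x → x < y → y ≤ b → y - x - m ≤ cnt F (Ioo (x : ℝ) (y : ℝ)) := by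
  intro x y h1 h2 h3
  have hk := h.2.2.2 x y h1 h2 h3
  have hsub : Ioo (x : ℝ) (y : ℝ) ⊆ Icc (a : ℝ) (b : ℝ) :=
    sub_Ioo_Icc (by exact_mod_cast h1) (by exact_mod_cast h3)
  rwa [inter_restrict hsub] at hk

lemma ISS_build {m a b : ℤ} {F : Finset ℝ} (hab : a < b)
    (c1 : b - a + m ≤ cnt F (Icc (a : ℝ) (b : ℝ)))
    (c2 : ∀ y : ℤ, a < y → y ≤ b → y - a ≤ cnt F (Ico (a : ℝ) (y : ℝ)))
    (c3 : ∀ x : ℤ, a ≤ x → x < b → b - x ≤ cnt F (Ioc (x : ℝ) (b : ℝ)))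
    (c4 : ∀ x y : ℤ, a ≤ x → x < y → y ≤ b → y - x - m ≤ cnt F (Ioo (x : ℝ) (y : ℝ))) :
    IsSamplingSet m a b ((F : Set ℝ) ∩ Icc (a : ℝ) (b : ℝ)) := by
  refine ⟨c1, ?_, ?_, ?_⟩
  · intro k h0 hk
    rcases eq_or_lt_of_le h0 with h | h
    · have : (0:ℤ) ≤ (((F : Set ℝ) ∩ Icc (a:ℝ) (b:ℝ) ∩ Ico (a:ℝ) ((a:ℝ) + k)).ncard : ℤ) :=
        Int.ofNat_nonneg _
      omega
    · have hc := c2 (a + k) (by omega) (by omega)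
      have hw : ((a + k : ℤ) : ℝ) = (a : ℝ) + (k : ℝ) := by push_cast; ring
      rw [hw] at hc
      have hsub : Ico (a : ℝ) ((a : ℝ) + (k : ℝ)) ⊆ Icc (a : ℝ) (b : ℝ) := by
        apply sub_Ico_Icc le_rfl
        have : ((a + k : ℤ) : ℝ) ≤ ((b : ℤ) : ℝ) := by exact_mod_cast (by omega : a + k ≤ b)
        push_cast at this; linarith
      rw [inter_restrict hsub]
      have : a + k - a = k := by ring
      rw [this] at hc
      exact hc
  · intro k h0 hk
    rcases eq_or_lt_of_le h0 with h | h
    · have : (0:ℤ) ≤ (((F : Set ℝ) ∩ Icc (a:ℝ) (b:ℝ) ∩ Ioc ((b:ℝ) - k) (b:ℝ)).ncard : ℤ) :=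
        Int.ofNat_nonneg _
      omega
    · have hc := c3 (b - k) (by omega) (by omega)
      have hw : ((b - k : ℤ) : ℝ) = (b : ℝ) - (k : ℝ) := by push_cast; ring
      rw [hw] at hc
      have hsub : Ioc ((b : ℝ) - (k : ℝ)) (b : ℝ) ⊆ Icc (a : ℝ) (b : ℝ) := by
        apply sub_Ioc_Icc _ le_rfl
        have : ((a : ℤ) : ℝ) ≤ ((b - k : ℤ) : ℝ) := by exact_mod_cast (by omega : a ≤ b - k)
        push_cast at this; linarith
      rw [inter_restrict hsub]
      have : b - (b - k) = k := by ring
      rw [this] at hc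
      exact hc
  · intro c d h1 h2 h3
    have hc := c4 c d h1 h2 h3
    have hsub : Ioo (c : ℝ) (d : ℝ) ⊆ Icc (a : ℝ) (b : ℝ) :=
      sub_Ioo_Icc (by exact_mod_cast h1) (by exact_mod_cast h3)
    rw [inter_restrict hsub]
    exact hc

-- ## reflection
noncomputable def negI (F : Finset ℝ) : Finset ℝ := F.image (fun x => -x)

lemma negI_negI (F : Finset ℝ) : negI (negI F) = F := by
  unfold negI
  rw [Finset.image_image]
  have : ((fun x : ℝ => -x) ∘ fun x : ℝ => -x) = id := by funext x; simp
  rw [this, Finset.image_id]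

lemma cnt_negI (F : Finset ℝ) (S : Set ℝ) :
    cnt (negI F) S = cnt F ((fun x : ℝ => -x) '' S) := by
  unfold cnt negI
  rw [Finset.coe_image]
  have h2 : ((fun x : ℝ => -x) '' (F : Set ℝ)) ∩ S
      = (fun x : ℝ => -x) '' ((F : Set ℝ) ∩ ((fun x : ℝ => -x) '' S)) := by
    rw [Set.image_inter neg_injective]
    congr 1
    rw [Set.image_image]
    simp
  rw [h2, Set.ncard_image_of_injective _ neg_injective]

lemma cnt_negI_Icc (F : Finset ℝ) (u v : ℤ) :
    cnt (negI F) (Icc (u : ℝ) (v : ℝ)) = cnt F (Icc ((-v : ℤ) : ℝ) ((-u : ℤ) : ℝ)) := by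
  rw [cnt_negI]; congr 1
  rw [Set.image_neg_eq_neg, Set.neg_Icc]; congr 1 <;> push_cast <;> ring

lemma cnt_negI_Ico (F : Finset ℝ) (u v : ℤ) :
    cnt (negI F) (Ico (u : ℝ) (v : ℝ)) = cnt F (Ioc ((-v : ℤ) : ℝ) ((-u : ℤ) : ℝ)) := by
  rw [cnt_negI]; congr 1
  rw [Set.image_neg_eq_neg, Set.neg_Ico]; congr 1 <;> push_cast <;> ring

lemma cnt_negI_Ioc (F : Finset ℝ) (u v : ℤ) :
    cnt (negI F) (Ioc (u : ℝ) (v : ℝ)) = cnt F (Ico ((-v : ℤ) : ℝ) ((-u : ℤ) : ℝ)) := by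
  rw [cnt_negI]; congr 1
  rw [Set.image_neg_eq_neg, Set.neg_Ioc]; congr 1 <;> push_cast <;> ring

lemma cnt_negI_Ioo (F : Finset ℝ) (u v : ℤ) :
    cnt (negI F) (Ioo (u : ℝ) (v : ℝ)) = cnt F (Ioo ((-v : ℤ) : ℝ) ((-u : ℤ) : ℝ)) := by
  rw [cnt_negI]; congr 1
  rw [Set.image_neg_eq_neg, Set.neg_Ioo]; congr 1 <;> push_cast <;> ring

-- ## minimal selection helpers
lemma exists_min_int (P : ℤ → Prop) (lo : ℤ) :
    ∀ n : ℕ, ∀ k : ℤ, (k - lo).toNat ≤ n → lo ≤ k → P k →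
    ∃ k₀, lo ≤ k₀ ∧ P k₀ ∧ ∀ j, lo ≤ j → j < k₀ → ¬ P j := by
  intro n
  induction n with
  | zero =>
    intro k hk hlo hP
    have hkl : k = lo := by omega
    subst hkl
    exact ⟨k, le_rfl, hP, fun j h1 h2 => absurd h2 (by omega)⟩
  | succ n ih =>
    intro k hk hlo hP
    by_cases h : ∃ j, lo ≤ j ∧ j < k ∧ P j
    · obtain ⟨j, hj1, hj2, hj3⟩ := h
      exact ih j (by omega) hj1 hj3
    · push_neg at h
      exact ⟨k, hlo, hP, fun j h1 h2 => h j h1 h2⟩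

lemma exists_min_window (P : ℤ → ℤ → Prop) (lo hi : ℤ) :
    ∀ n : ℕ, ∀ x y : ℤ, (y - x).toNat ≤ n → lo ≤ x → x < y → y ≤ hi → P x y →
    ∃ u v, lo ≤ u ∧ u < v ∧ v ≤ hi ∧ P u v ∧
      ∀ u' v', u ≤ u' → u' < v' → v' ≤ v → v' - u' < v - u → ¬ P u' v' := by
  intro n; induction n with
  | zero => intro x y h1 h2 h3 h4 h5; exact absurd h1 (by omega)
  | succ n ih =>
    intro x y h1 h2 h3 h4 h5
    by_cases h : ∃ u v, x ≤ u ∧ u < v ∧ v ≤ y ∧ v - u < y - x ∧ P u v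
    · obtain ⟨u, v, g1, g2, g3, g4, g5⟩ := h
      exact ih u v (by omega) (by omega) g2 (by omega) g5
    · push_neg at h
      exact ⟨x, y, h2, h3, h4, h5, fun u' v' a1 a2 a3 a4 => h u' v' a1 a2 a3 a4⟩

-- ## the pair target
def PairC (m N₁ N₂ : ℤ) (E₁ E₂ : Finset ℝ) : Prop :=
  ∃ i₁ i₁' i₂ i₂' : ℤ, N₁ ≤ i₁ ∧ i₁ < i₁' ∧ N₁ ≤ i₂ ∧ i₂ < i₂' ∧ i₁' ≤ N₂ ∧ i₂' ≤ N₂ ∧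
    (∃ p : ℤ, Set.Icc i₁ i₁' ∩ Set.Icc i₂ i₂' = {p}) ∧
    IsSamplingSet m i₁ i₁' ((E₁ : Set ℝ) ∩ Set.Icc (i₁ : ℝ) (i₁' : ℝ)) ∧
    IsSamplingSet m i₂ i₂' ((E₂ : Set ℝ) ∩ Set.Icc (i₂ : ℝ) (i₂' : ℝ))

lemma pair_mk {m N₁ N₂ γ δ r : ℤ} {E₁ E₂ : Finset ℝ}
    (h1 : N₁ ≤ γ) (h2 : γ < δ) (h3 : δ < r) (h4 : r ≤ N₂)
    (hA : IsSamplingSet m γ δ ((E₁ : Set ℝ) ∩ Icc (γ : ℝ) (δ : ℝ)))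
    (hB : IsSamplingSet m δ r ((E₂ : Set ℝ) ∩ Icc (δ : ℝ) (r : ℝ))) :
    PairC m N₁ N₂ E₁ E₂ :=
  ⟨γ, δ, δ, r, h1, h2, by omega, h3, by omega, h4,
    ⟨δ, by ext z; simp [Set.mem_Icc]; omega⟩, hA, hB⟩

-- ## reflected sampling set
lemma ISS_negI {m a b : ℤ} {F : Finset ℝ} (hab : a < b)
    (h : IsSamplingSet m a b ((F : Set ℝ) ∩ Icc (a : ℝ) (b : ℝ))) :
    IsSamplingSet m (-b) (-a) ((negI F : Set ℝ) ∩ Icc ((-b : ℤ) : ℝ) ((-a : ℤ) : ℝ)) := by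
  apply ISS_build (by omega)
  · rw [cnt_negI_Icc]
    have := ISS_card' h
    have he : (-(-a) : ℤ) = a := by ring
    have he2 : (-(-b) : ℤ) = b := by ring
    rw [he, he2]
    omega
  · intro y h1 h2
    rw [cnt_negI_Ico]
    have he : (-(-b) : ℤ) = b := by ring
    rw [he]
    have := ISS_right' (le_of_lt hab) h (-y) (by omega) (by omega)
    omega
  · intro x h1 h2
    rw [cnt_negI_Ioc]
    have he : (-(-a) : ℤ) = a := by ring
    rw [he]
    have := ISS_left' (le_of_lt hab) h (-x) (by omega) (by omega)
    omega
  · intro x y h1 h2 h3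
    rw [cnt_negI_Ioo]
    have := ISS_mid' h (-y) (-x) (by omega) (by omega) (by omega)
    omega

lemma Pair_negI {m N₁ N₂ : ℤ} {E₁ E₂ : Finset ℝ}
    (h : PairC m (-N₂) (-N₁) (negI E₁) (negI E₂)) : PairC m N₁ N₂ E₁ E₂ := by
  obtain ⟨i₁, i₁', i₂, i₂', h1, h2, h3, h4, h5, h6, ⟨p, hp⟩, hs1, hs2⟩ := h
  have hr1 := ISS_negI h2 hs1
  have hr2 := ISS_negI h4 hs2
  rw [negI_negI] at hr1 hr2
  refine ⟨-i₁', -i₁, -i₂', -i₂, by omega, by omega, by omega, by omega, by omega, by omega,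
    ⟨-p, ?_⟩, hr1, hr2⟩
  ext z
  have := Set.ext_iff.1 hp (-z)
  simp only [Set.mem_inter_iff, Set.mem_Icc, Set.mem_singleton_iff] at this ⊢
  omega

lemma sub_Ico_Ico {a a' y y' : ℝ} (ha : a ≤ a') (hy : y ≤ y') : Ico a' y ⊆ Ico a y' :=
  fun z hz => ⟨le_trans ha hz.1, lt_of_lt_of_le hz.2 hy⟩

/-- An inclusion-minimal mid-failure window of `E₂` carries a sampling set of `E₁`. -/
lemma L1 {m N₁ N₂ γ δ : ℤ} {E E₁ E₂ : Finset ℝ}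
    (hm : 1 ≤ m) (h1 : N₁ ≤ γ) (h2 : γ < δ) (h3 : δ ≤ N₂)
    (hsplit : ∀ S : Set ℝ, cnt E S = cnt E₁ S + cnt E₂ S)
    (hmid : ∀ c d : ℤ, N₁ ≤ c → c < d → d ≤ N₂ → 2*(d-c)-1 ≤ cnt E (Ioo (c:ℝ) (d:ℝ)))
    (hMf : cnt E₂ (Ioo (γ:ℝ) (δ:ℝ)) ≤ δ - γ - m - 1)
    (hmin : ∀ x y : ℤ, γ ≤ x → x < y → y ≤ δ → y - x < δ - γ →
      y - x - m ≤ cnt E₂ (Ioo (x:ℝ) (y:ℝ))) :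
    IsSamplingSet m γ δ ((E₁ : Set ℝ) ∩ Icc (γ:ℝ) (δ:ℝ)) := by
  have hrich : δ - γ + m ≤ cnt E₁ (Ioo (γ:ℝ) (δ:ℝ)) := by
    have hEmid := hmid γ δ h1 h2 h3
    have hs := hsplit (Ioo (γ:ℝ) (δ:ℝ))
    omega
  apply ISS_build h2
  · -- card
    have : cnt E₁ (Ioo (γ:ℝ) (δ:ℝ)) ≤ cnt E₁ (Icc (γ:ℝ) (δ:ℝ)) :=
      cnt_mono _ (sub_Ioo_Icc le_rfl le_rfl)
    omega
  · -- left
    intro y hy1 hy2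
    by_contra hcon
    push_neg at hcon
    have hyr : (γ:ℝ) < (y:ℝ) := by exact_mod_cast hy1
    have hyd : (y:ℝ) ≤ (δ:ℝ) := by exact_mod_cast hy2
    have hb : y - γ ≤ cnt E₂ (Ioo (γ:ℝ) (y:ℝ)) := by
      have hE := hmid γ y h1 hy1 (by omega)
      have hs := hsplit (Ioo (γ:ℝ) (y:ℝ))
      have hmono : cnt E₁ (Ioo (γ:ℝ) (y:ℝ)) ≤ cnt E₁ (Ico (γ:ℝ) (y:ℝ)) :=
        cnt_mono _ (sub_Ioo_Ico' le_rfl le_rfl)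
      omega
    rcases eq_or_lt_of_le hy2 with he | hlt
    · subst he; omega
    · have hmn := hmin y δ (by omega) hlt le_rfl (by omega)
      have htwo : cnt E₂ (Ioo (γ:ℝ) (y:ℝ)) + cnt E₂ (Ioo (y:ℝ) (δ:ℝ))
          ≤ cnt E₂ (Ioo (γ:ℝ) (δ:ℝ)) := by
        apply cnt_two_le _ (disj_lt (fun z hz => hz.2) (fun z hz => le_of_lt hz.1))
        exact Set.union_subset (sub_Ioo_Ioo le_rfl hyd) (sub_Ioo_Ioo (le_of_lt hyr) le_rfl)
      omega
  · -- right
    intro x hx1 hx2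
    by_contra hcon
    push_neg at hcon
    have hxr : (γ:ℝ) ≤ (x:ℝ) := by exact_mod_cast hx1
    have hxd : (x:ℝ) < (δ:ℝ) := by exact_mod_cast hx2
    have hb : δ - x ≤ cnt E₂ (Ioo (x:ℝ) (δ:ℝ)) := by
      have hE := hmid x δ (by omega) hx2 h3
      have hs := hsplit (Ioo (x:ℝ) (δ:ℝ))
      have hmono : cnt E₁ (Ioo (x:ℝ) (δ:ℝ)) ≤ cnt E₁ (Ioc (x:ℝ) (δ:ℝ)) :=
        cnt_mono _ (sub_Ioo_Ioc' le_rfl)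
      omega
    rcases eq_or_lt_of_le hx1 with he | hlt
    · subst he; omega
    · have hmn := hmin γ x le_rfl hlt (by omega) (by omega)
      have htwo : cnt E₂ (Ioo (γ:ℝ) (x:ℝ)) + cnt E₂ (Ioo (x:ℝ) (δ:ℝ))
          ≤ cnt E₂ (Ioo (γ:ℝ) (δ:ℝ)) := by
        apply cnt_two_le _ (disj_lt (fun z hz => hz.2) (fun z hz => le_of_lt hz.1))
        exact Set.union_subset (sub_Ioo_Ioo le_rfl (le_of_lt hxd)) (sub_Ioo_Ioo hxr le_rfl)
      omega
  · -- mid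
    intro x y hx hxy hyd
    by_contra hcon
    push_neg at hcon
    by_cases hfull : y - x = δ - γ
    · have hxg : x = γ := by omega
      have hyδ : y = δ := by omega
      subst hxg; subst hyδ; omega
    · have hyr : (x:ℝ) < (y:ℝ) := by exact_mod_cast hxy
      have hxg : (γ:ℝ) ≤ (x:ℝ) := by exact_mod_cast hx
      have hyd' : (y:ℝ) ≤ (δ:ℝ) := by exact_mod_cast hyd
      have hb : (y - x) + m ≤ cnt E₂ (Ioo (x:ℝ) (y:ℝ)) := by
        have hE := hmid x y (by omega) hxy (by omega)
        have hs := hsplit (Ioo (x:ℝ) (y:ℝ))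
        omega
      have hS1 : x - γ - m ≤ cnt E₂ (Ioo (γ:ℝ) (x:ℝ)) := by
        rcases eq_or_lt_of_le hx with he | hlt
        · have := cnt_nonneg E₂ (Ioo (γ:ℝ) (x:ℝ)); omega
        · exact le_trans (by omega) (hmin γ x le_rfl hlt (by omega) (by omega))
      have hS2 : δ - y - m ≤ cnt E₂ (Ioo (y:ℝ) (δ:ℝ)) := by
        rcases eq_or_lt_of_le hyd with he | hlt
        · have := cnt_nonneg E₂ (Ioo (y:ℝ) (δ:ℝ)); omega
        · exact le_trans (by omega) (hmin y δ (by omega) hlt le_rfl (by omega))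
      have hthree : cnt E₂ (Ioo (γ:ℝ) (x:ℝ)) + cnt E₂ (Ioo (x:ℝ) (y:ℝ))
          + cnt E₂ (Ioo (y:ℝ) (δ:ℝ)) ≤ cnt E₂ (Ioo (γ:ℝ) (δ:ℝ)) := by
        apply cnt_three_le _ (disj_lt (fun z hz => hz.2) (fun z hz => le_of_lt hz.1))
        · apply disj_lt (t := (y:ℝ)) _ (fun z hz => le_of_lt hz.1)
          rintro z (hz | hz)
          · exact lt_trans hz.2 hyr
          · exact hz.2
        · apply Set.union_subset
          apply Set.union_subset
          · exact sub_Ioo_Ioo le_rfl (le_trans (le_of_lt hyr) hyd')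
          · exact sub_Ioo_Ioo hxg hyd'
          · exact sub_Ioo_Ioo (le_trans hxg (le_of_lt hyr)) le_rfl
      omega

/-- The key suffix counting fact at a minimal prefix failure of `E₂`. -/
lemma KEY {N₁ N₂ δ y₀ : ℤ} {E E₁ E₂ : Finset ℝ}
    (h1 : N₁ ≤ δ) (h2 : δ < y₀) (h3 : y₀ ≤ N₂)
    (hsplit : ∀ S : Set ℝ, cnt E S = cnt E₁ S + cnt E₂ S)
    (hmid : ∀ c d : ℤ, N₁ ≤ c → c < d → d ≤ N₂ → 2*(d-c)-1 ≤ cnt E (Ioo (c:ℝ) (d:ℝ)))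
    (hfail : cnt E₂ (Ico (δ:ℝ) (y₀:ℝ)) ≤ y₀ - δ - 1)
    (hpj : ∀ z : ℤ, δ < z → z < y₀ → z - δ ≤ cnt E₂ (Ico (δ:ℝ) (z:ℝ))) :
    ∀ x : ℤ, δ ≤ x → x < y₀ → y₀ - x ≤ cnt E₁ (Ioo (x:ℝ) (y₀:ℝ)) := by
  intro x hx1 hx2
  have hup : cnt E₂ (Ico (x:ℝ) (y₀:ℝ)) ≤ y₀ - x - 1 := by
    rcases eq_or_lt_of_le hx1 with he | hlt
    · subst he; exact hfail
    · have ha := hpj x hlt hx2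
      have hxr : (δ:ℝ) ≤ (x:ℝ) := by exact_mod_cast hx1
      have hxy : (x:ℝ) < (y₀:ℝ) := by exact_mod_cast hx2
      have htwo : cnt E₂ (Ico (δ:ℝ) (x:ℝ)) + cnt E₂ (Ico (x:ℝ) (y₀:ℝ))
          ≤ cnt E₂ (Ico (δ:ℝ) (y₀:ℝ)) := by
        apply cnt_two_le _ (disj_lt (fun z hz => hz.2) (fun z hz => hz.1))
        exact Set.union_subset (sub_Ico_Ico le_rfl (le_of_lt hxy)) (sub_Ico_Ico hxr le_rfl)
      omega
  have hE := hmid x y₀ (by omega) hx2 h3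
  have hs := hsplit (Ioo (x:ℝ) (y₀:ℝ))
  have hmono : cnt E₂ (Ioo (x:ℝ) (y₀:ℝ)) ≤ cnt E₂ (Ico (x:ℝ) (y₀:ℝ)) :=
    cnt_mono _ (sub_Ioo_Ico' le_rfl le_rfl)
  omega

/-- A minimal left failure of `E₂` (with no mid failures) carries a sampling set of `E₁`. -/
lemma L1' {m N₁ N₂ d₀ : ℤ} {E E₁ E₂ : Finset ℝ}
    (hm : 1 ≤ m) (hk1 : N₁ < d₀) (hk2 : d₀ ≤ N₂)
    (hsplit : ∀ S : Set ℝ, cnt E S = cnt E₁ S + cnt E₂ S)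
    (hmid : ∀ c d : ℤ, N₁ ≤ c → c < d → d ≤ N₂ → 2*(d-c)-1 ≤ cnt E (Ioo (c:ℝ) (d:ℝ)))
    (hleft : ∀ y : ℤ, N₁ < y → y ≤ N₂ → 2*(y-N₁) + m - 1 ≤ cnt E (Ico (N₁:ℝ) (y:ℝ)))
    (hLf : cnt E₂ (Ico (N₁:ℝ) (d₀:ℝ)) ≤ d₀ - N₁ - 1)
    (hLmin : ∀ z : ℤ, N₁ < z → z < d₀ → z - N₁ ≤ cnt E₂ (Ico (N₁:ℝ) (z:ℝ)))
    (hnoMf : ∀ x y : ℤ, N₁ ≤ x → x < y → y ≤ N₂ → y - x - m ≤ cnt E₂ (Ioo (x:ℝ) (y:ℝ))) :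
    IsSamplingSet m N₁ d₀ ((E₁ : Set ℝ) ∩ Icc (N₁:ℝ) (d₀:ℝ)) := by
  have hcard1 : d₀ - N₁ + m ≤ cnt E₁ (Ico (N₁:ℝ) (d₀:ℝ)) := by
    have hl := hleft d₀ hk1 hk2
    have hs := hsplit (Ico (N₁:ℝ) (d₀:ℝ))
    omega
  apply ISS_build hk1
  · have : cnt E₁ (Ico (N₁:ℝ) (d₀:ℝ)) ≤ cnt E₁ (Icc (N₁:ℝ) (d₀:ℝ)) :=
      cnt_mono _ (sub_Ico_Icc le_rfl le_rfl)
    omega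
  · intro y hy1 hy2
    by_contra hcon
    push_neg at hcon
    rcases eq_or_lt_of_le hy2 with he | hlt
    · subst he; omega
    · have hyr : (N₁:ℝ) < (y:ℝ) := by exact_mod_cast hy1
      have hyd : (y:ℝ) < (d₀:ℝ) := by exact_mod_cast hlt
      have hb : (y - N₁) + m ≤ cnt E₂ (Ico (N₁:ℝ) (y:ℝ)) := by
        have hl := hleft y hy1 (by omega)
        have hs := hsplit (Ico (N₁:ℝ) (y:ℝ))
        omega
      have hnm := hnoMf y d₀ (by omega) hlt (by omega)
      have htwo : cnt E₂ (Ico (N₁:ℝ) (y:ℝ)) + cnt E₂ (Ioo (y:ℝ) (d₀:ℝ))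
          ≤ cnt E₂ (Ico (N₁:ℝ) (d₀:ℝ)) := by
        apply cnt_two_le _ (disj_lt (fun z hz => hz.2) (fun z hz => le_of_lt hz.1))
        exact Set.union_subset (sub_Ico_Ico le_rfl (le_of_lt hyd))
          (sub_Ioo_Ico' (le_of_lt hyr) le_rfl)
      omega
  · intro x hx1 hx2
    by_contra hcon
    push_neg at hcon
    have hxr : (N₁:ℝ) ≤ (x:ℝ) := by exact_mod_cast hx1
    have hxd : (x:ℝ) < (d₀:ℝ) := by exact_mod_cast hx2
    have hb : d₀ - x ≤ cnt E₂ (Ioo (x:ℝ) (d₀:ℝ)) := by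
      have hE := hmid x d₀ hx1 hx2 hk2
      have hs := hsplit (Ioo (x:ℝ) (d₀:ℝ))
      have hmono : cnt E₁ (Ioo (x:ℝ) (d₀:ℝ)) ≤ cnt E₁ (Ioc (x:ℝ) (d₀:ℝ)) :=
        cnt_mono _ (sub_Ioo_Ioc' le_rfl)
      omega
    have hpre : x - N₁ ≤ cnt E₂ (Ico (N₁:ℝ) (x:ℝ)) := by
      rcases eq_or_lt_of_le hx1 with he | hlt
      · have := cnt_nonneg E₂ (Ico (N₁:ℝ) (x:ℝ)); omega
      · exact hLmin x hlt hx2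
    have htwo : cnt E₂ (Ico (N₁:ℝ) (x:ℝ)) + cnt E₂ (Ioo (x:ℝ) (d₀:ℝ))
        ≤ cnt E₂ (Ico (N₁:ℝ) (d₀:ℝ)) := by
      apply cnt_two_le _ (disj_lt (fun z hz => hz.2) (fun z hz => le_of_lt hz.1))
      exact Set.union_subset (sub_Ico_Ico le_rfl (le_of_lt hxd))
        (sub_Ioo_Ico' hxr le_rfl)
    omega
  · intro x y hx hxy hyd
    by_contra hcon
    push_neg at hcon
    have hxyr : (x:ℝ) < (y:ℝ) := by exact_mod_cast hxy
    have hxr : (N₁:ℝ) ≤ (x:ℝ) := by exact_mod_cast hx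
    have hyr : (y:ℝ) ≤ (d₀:ℝ) := by exact_mod_cast hyd
    have hb : (y - x) + m ≤ cnt E₂ (Ioo (x:ℝ) (y:ℝ)) := by
      have hE := hmid x y hx hxy (by omega)
      have hs := hsplit (Ioo (x:ℝ) (y:ℝ))
      omega
    have hpre : x - N₁ ≤ cnt E₂ (Ico (N₁:ℝ) (x:ℝ)) := by
      rcases eq_or_lt_of_le hx with he | hlt
      · have := cnt_nonneg E₂ (Ico (N₁:ℝ) (x:ℝ)); omega
      · exact hLmin x hlt (by omega)
    have hsuf : d₀ - y - m ≤ cnt E₂ (Ioo (y:ℝ) (d₀:ℝ)) := by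
      rcases eq_or_lt_of_le hyd with he | hlt
      · have := cnt_nonneg E₂ (Ioo (y:ℝ) (d₀:ℝ)); omega
      · exact le_trans (by omega) (hnoMf y d₀ (by omega) hlt (by omega))
    have hthree : cnt E₂ (Ico (N₁:ℝ) (x:ℝ)) + cnt E₂ (Ioo (x:ℝ) (y:ℝ))
        + cnt E₂ (Ioo (y:ℝ) (d₀:ℝ)) ≤ cnt E₂ (Ico (N₁:ℝ) (d₀:ℝ)) := by
      apply cnt_three_le _ (disj_lt (fun z hz => hz.2) (fun z hz => le_of_lt hz.1))
      · apply disj_lt (t := (y:ℝ)) _ (fun z hz => le_of_lt hz.1)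
        rintro z (hz | hz)
        · exact lt_trans hz.2 hxyr
        · exact hz.2
      · apply Set.union_subset
        apply Set.union_subset
        · exact sub_Ico_Ico le_rfl (le_trans (le_of_lt hxyr) hyr)
        · exact sub_Ioo_Ico' hxr hyr
        · exact sub_Ioo_Ico' (le_trans hxr (le_of_lt hxyr)) le_rfl
    omega

lemma sub_Ioc_Ioc {x d b : ℝ} (h : d ≤ b) : Ioc x d ⊆ Ioc x b :=
  fun z hz => ⟨hz.1, le_trans hz.2 h⟩
lemma sub_Ioo_Ioc2 {x d y : ℝ} (h : x ≤ d) : Ioo d y ⊆ Ioc x y :=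
  fun z hz => ⟨lt_of_le_of_lt h hz.1, le_of_lt hz.2⟩

/-- Main recursion: given an `E₁`-anchor `[γ,δ]` and `E₂`-mass on `[δ,b]`, a pair exists. -/
lemma UR : ∀ n : ℕ, ∀ (m N₁ N₂ γ δ b : ℤ) (E E₁ E₂ : Finset ℝ),
    1 ≤ m → N₁ ≤ γ → γ < δ → δ < b → b ≤ N₂ →
    (∀ S : Set ℝ, cnt E S = cnt E₁ S + cnt E₂ S) →
    (∀ c d : ℤ, N₁ ≤ c → c < d → d ≤ N₂ → 2*(d-c)-1 ≤ cnt E (Ioo (c:ℝ) (d:ℝ))) →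
    IsSamplingSet m γ δ ((E₁ : Set ℝ) ∩ Icc (γ:ℝ) (δ:ℝ)) →
    (b - δ) + m ≤ cnt E₂ (Icc (δ:ℝ) (b:ℝ)) →
    (b - δ).toNat ≤ n →
    PairC m N₁ N₂ E₁ E₂ := by
  intro n
  induction n with
  | zero =>
    intro m N₁ N₂ γ δ b E E₁ E₂ hm hNγ hγδ hδb hbN hsplit hmid hanc hmass hn
    exact absurd hn (by omega)
  | succ n ih =>
    intro m N₁ N₂ γ δ b E E₁ E₂ hm hNγ hγδ hδb hbN hsplit hmid hanc hmass hn
    have hδr : (γ:ℝ) < (δ:ℝ) := by exact_mod_cast hγδ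
    by_cases hpre : ∀ y : ℤ, δ < y → y ≤ b → y - δ ≤ cnt E₂ (Ico (δ:ℝ) (y:ℝ))
    · -- prefix conditions at δ hold
      by_cases hsuf : ∀ x : ℤ, δ ≤ x → x < b → b - x ≤ cnt E₂ (Ioc (x:ℝ) (b:ℝ))
      · by_cases hmidf : ∃ x y : ℤ, δ ≤ x ∧ x < y ∧ y ≤ b ∧
            cnt E₂ (Ioo (x:ℝ) (y:ℝ)) ≤ y - x - m - 1
        · -- a mid failure inside [δ,b]
          obtain ⟨x₁, y₁, g1, g2, g3, g4⟩ := hmidf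
          obtain ⟨γ₂, δ₂, k1, k2, k3, k4, k5⟩ :=
            exists_min_window (fun x y => cnt E₂ (Ioo (x:ℝ) (y:ℝ)) ≤ y - x - m - 1) δ b
              (y₁ - x₁).toNat x₁ y₁ (by omega) g1 g2 g3 g4
          have hanc2 : IsSamplingSet m γ₂ δ₂ ((E₁ : Set ℝ) ∩ Icc (γ₂:ℝ) (δ₂:ℝ)) := by
            apply L1 hm (by omega) k2 (by omega) hsplit hmid k4
            intro x y a1 a2 a3 a4
            have hnf := k5 x y a1 a2 a3 (by omega)
            by_contra hc; push_neg at hc; exact hnf (by omega)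
          have hAB : cnt E₂ (Icc (δ:ℝ) (b:ℝ)) ≤ cnt E₂ (Icc (δ:ℝ) (γ₂:ℝ))
              + cnt E₂ (Ioo (γ₂:ℝ) (δ₂:ℝ)) + cnt E₂ (Icc (δ₂:ℝ) (b:ℝ)) :=
            cnt_le_three _ cov_Icc3
          by_cases hR : δ₂ < b ∧ (b - δ₂) + m ≤ cnt E₂ (Icc (δ₂:ℝ) (b:ℝ))
          · exact ih m N₁ N₂ γ₂ δ₂ b E E₁ E₂ hm (by omega) k2 hR.1 hbN hsplit hmid hanc2
              hR.2 (by omega)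
          · push_neg at hR
            have hA : (γ₂ - δ) + m + 1 ≤ cnt E₂ (Icc (δ:ℝ) (γ₂:ℝ)) := by
              rcases eq_or_lt_of_le k3 with he | hlt
              · have hb1 : cnt E₂ (Icc (δ₂:ℝ) (b:ℝ)) ≤ 1 := by
                  rw [he]; exact cnt_Icc_self_le E₂ (b:ℝ)
                omega
              · have := hR hlt
                omega
            have hγ₂ : δ < γ₂ := by
              rcases eq_or_lt_of_le k1 with he | h
              · exfalso
                rw [← he] at hA
                have := cnt_Icc_self_le E₂ (δ:ℝ)
                omega
              · exact h
            apply Pair_negI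
            apply ih m (-N₂) (-N₁) (-δ₂) (-γ₂) (-δ) (negI E) (negI E₁) (negI E₂) hm
              (by omega) (by omega) (by omega) (by omega)
            · intro S; rw [cnt_negI, cnt_negI, cnt_negI]; exact hsplit _
            · intro c d u1 u2 u3
              rw [cnt_negI_Ioo]
              have := hmid (-d) (-c) (by omega) (by omega) (by omega)
              omega
            · exact ISS_negI k2 hanc2
            · rw [cnt_negI_Icc]
              have he1 : (-(-δ) : ℤ) = δ := by ring
              have he2 : (-(-γ₂) : ℤ) = γ₂ := by ring
              rw [he1, he2]
              omega
            · omega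
        · -- no mid failure: E₂ samples [δ,b]
          push_neg at hmidf
          have hsamp : IsSamplingSet m δ b ((E₂ : Set ℝ) ∩ Icc (δ:ℝ) (b:ℝ)) := by
            apply ISS_build hδb hmass hpre hsuf
            intro x y u1 u2 u3
            have := hmidf x y u1 u2 u3
            omega
          exact pair_mk hNγ hγδ hδb hbN hanc hsamp
      · -- a suffix failure: shrink b
        push_neg at hsuf
        obtain ⟨x₁, hx1, hx2, hx3⟩ := hsuf
        have hxδ : δ < x₁ := by
          rcases eq_or_lt_of_le hx1 with he | h
          · exfalso
            rw [← he] at hx3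
            have hcov : cnt E₂ (Icc (δ:ℝ) (b:ℝ)) ≤ cnt E₂ {(δ:ℝ)} + cnt E₂ (Ioc (δ:ℝ) (b:ℝ)) :=
              cnt_le_two _ cov_Icc_s_Ioc
            have := cnt_singleton_le E₂ (δ:ℝ)
            omega
          · exact h
        have hmass' : (x₁ - δ) + m ≤ cnt E₂ (Icc (δ:ℝ) (x₁:ℝ)) := by
          have hcov : cnt E₂ (Icc (δ:ℝ) (b:ℝ)) ≤ cnt E₂ (Icc (δ:ℝ) (x₁:ℝ))
              + cnt E₂ (Ioc (x₁:ℝ) (b:ℝ)) := cnt_le_two _ cov_Icc_Icc_Ioc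
          omega
        exact ih m N₁ N₂ γ δ x₁ E E₁ E₂ hm hNγ hγδ hxδ (by omega) hsplit hmid hanc hmass'
          (by omega)
    · -- a prefix failure at δ
      push_neg at hpre
      obtain ⟨y₁, hy1, hy2, hy3⟩ := hpre
      obtain ⟨y₀, hy₀lo, ⟨hy₀b, hy₀f⟩, hy₀min⟩ :=
        exists_min_int (fun y => y ≤ b ∧ cnt E₂ (Ico (δ:ℝ) (y:ℝ)) ≤ y - δ - 1) (δ+1)
          (b - δ).toNat y₁ (by omega) (by omega) ⟨hy2, by omega⟩
      have hpj : ∀ z : ℤ, δ < z → z < y₀ → z - δ ≤ cnt E₂ (Ico (δ:ℝ) (z:ℝ)) := by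
        intro z hz1 hz2
        have hnp := hy₀min z (by omega) hz2
        by_contra hc; push_neg at hc; exact hnp ⟨by omega, by omega⟩
      have hkey := KEY (by omega : N₁ ≤ δ) (by omega : δ < y₀) (by omega : y₀ ≤ N₂)
        hsplit hmid hy₀f hpj
      have hδy : (δ:ℝ) < (y₀:ℝ) := by exact_mod_cast (by omega : δ < y₀)
      by_cases hiss : IsSamplingSet m γ y₀ ((E₁ : Set ℝ) ∩ Icc (γ:ℝ) (y₀:ℝ))
      · -- extend anchor and recurse to the right
        have hlt : y₀ < b := by
          rcases eq_or_lt_of_le hy₀b with he | h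
          · exfalso
            rw [he] at hy₀f
            have hcov : cnt E₂ (Icc (δ:ℝ) (b:ℝ)) ≤ cnt E₂ (Ico (δ:ℝ) (b:ℝ)) + cnt E₂ {(b:ℝ)} :=
              cnt_le_two _ cov_Icc_Ico_s
            have := cnt_singleton_le E₂ (b:ℝ)
            omega
          · exact h
        have hmass' : (b - y₀) + m ≤ cnt E₂ (Icc (y₀:ℝ) (b:ℝ)) := by
          have hcov : cnt E₂ (Icc (δ:ℝ) (b:ℝ)) ≤ cnt E₂ (Ico (δ:ℝ) (y₀:ℝ))
              + cnt E₂ (Icc (y₀:ℝ) (b:ℝ)) := cnt_le_two _ cov_Icc_Ico_Icc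
          omega
        exact ih m N₁ N₂ γ y₀ b E E₁ E₂ hm hNγ (by omega) hlt hbN hsplit hmid hiss hmass'
          (by omega)
      · -- E₁ fails to sample [γ, y₀]: find a rich E₂-window and shrink
        by_cases hc2 : ∀ y : ℤ, γ < y → y ≤ y₀ → y - γ ≤ cnt E₁ (Ico (γ:ℝ) (y:ℝ))
        · by_cases hc4 : ∀ x y : ℤ, γ ≤ x → x < y → y ≤ y₀ → y - x - m ≤ cnt E₁ (Ioo (x:ℝ) (y:ℝ))
          · -- then also card and right conditions hold: contradiction with hiss
            exfalso
            have hck0 := hkey δ le_rfl (by omega)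
            have hc1 : y₀ - γ + m ≤ cnt E₁ (Icc (γ:ℝ) (y₀:ℝ)) := by
              have hcard := ISS_card' hanc
              have htwo : cnt E₁ (Icc (γ:ℝ) (δ:ℝ)) + cnt E₁ (Ioo (δ:ℝ) (y₀:ℝ))
                  ≤ cnt E₁ (Icc (γ:ℝ) (y₀:ℝ)) := by
                apply cnt_two_le _ (disj_le (fun z hz => hz.2) (fun z hz => hz.1))
                exact Set.union_subset (sub_Icc_Icc le_rfl (le_of_lt hδy))
                  (sub_Ioo_Icc (le_of_lt hδr) le_rfl)
              omega
            have hc3 : ∀ x : ℤ, γ ≤ x → x < y₀ → y₀ - x ≤ cnt E₁ (Ioc (x:ℝ) (y₀:ℝ)) := by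
              intro x hx1 hx2
              rcases lt_or_ge x δ with hxδ | hxδ
              · have h1 := ISS_right' (le_of_lt hγδ) hanc x hx1 hxδ
                have hxδr : (x:ℝ) < (δ:ℝ) := by exact_mod_cast hxδ
                have htwo : cnt E₁ (Ioc (x:ℝ) (δ:ℝ)) + cnt E₁ (Ioo (δ:ℝ) (y₀:ℝ))
                    ≤ cnt E₁ (Ioc (x:ℝ) (y₀:ℝ)) := by
                  apply cnt_two_le _ (disj_le (fun z hz => hz.2) (fun z hz => hz.1))
                  exact Set.union_subset (sub_Ioc_Ioc (le_of_lt hδy))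
                    (sub_Ioo_Ioc2 (le_of_lt hxδr))
                omega
              · exact le_trans (hkey x hxδ hx2) (cnt_mono _ (sub_Ioo_Ioc' le_rfl))
            exact hiss (ISS_build (by omega) hc1 hc2 hc3 hc4)
          · -- mid-type failure of E₁ inside [γ, y₀]
            push_neg at hc4
            obtain ⟨x, w, hx1, hx2, hx3, hx4⟩ := hc4
            have hwδ : δ < w := by
              by_contra hq; push_neg at hq
              have := ISS_mid' hanc x w hx1 hx2 hq
              omega
            have hwr : (δ:ℝ) < (w:ℝ) := by exact_mod_cast hwδ
            -- key sub-bound: E₁ on (δ, w) is small in each case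
            have hwylt : w < y₀ := by
              rcases eq_or_lt_of_le hx3 with he | h
              · exfalso
                rcases lt_trichotomy x δ with hxδ | hxδ | hxδ
                · have h1 := ISS_right' (le_of_lt hγδ) hanc x hx1 hxδ
                  have hck := hkey δ le_rfl (by omega)
                  have hxδr : (x:ℝ) < (δ:ℝ) := by exact_mod_cast hxδ
                  have htwo : cnt E₁ (Ioc (x:ℝ) (δ:ℝ)) + cnt E₁ (Ioo (δ:ℝ) (y₀:ℝ))
                      ≤ cnt E₁ (Ioo (x:ℝ) (y₀:ℝ)) := by
                    apply cnt_two_le _ (disj_le (fun z hz => hz.2) (fun z hz => hz.1))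
                    exact Set.union_subset (sub_Ioc_Ioo le_rfl hδy)
                      (sub_Ioo_Ioo (le_of_lt hxδr) le_rfl)
                  rw [he] at hx4
                  omega
                · subst hxδ
                  have hck := hkey x le_rfl (by omega)
                  rw [he] at hx4
                  omega
                · have hck := hkey x (le_of_lt hxδ) (by omega)
                  rw [he] at hx4
                  omega
              · exact h
            -- in all cases we obtain a rich window (δ, w) or ⟨prefix + rich⟩ giving mass on [δ,w]
            have hmass' : (w - δ) + m ≤ cnt E₂ (Icc (δ:ℝ) (w:ℝ)) := by
              rcases lt_trichotomy x δ with hxδ | hxδ | hxδ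
              · -- x < δ: E₁ small on (δ,w)
                have h1 := ISS_right' (le_of_lt hγδ) hanc x hx1 hxδ
                have hxδr : (x:ℝ) < (δ:ℝ) := by exact_mod_cast hxδ
                have htwo : cnt E₁ (Ioc (x:ℝ) (δ:ℝ)) + cnt E₁ (Ioo (δ:ℝ) (w:ℝ))
                    ≤ cnt E₁ (Ioo (x:ℝ) (w:ℝ)) := by
                  apply cnt_two_le _ (disj_le (fun z hz => hz.2) (fun z hz => hz.1))
                  exact Set.union_subset (sub_Ioc_Ioo le_rfl hwr)
                    (sub_Ioo_Ioo (le_of_lt hxδr) le_rfl)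
                have hE1small : cnt E₁ (Ioo (δ:ℝ) (w:ℝ)) ≤ (w - δ) - m - 1 := by omega
                have hE := hmid δ w (by omega) hwδ (by omega)
                have hs := hsplit (Ioo (δ:ℝ) (w:ℝ))
                have hmono : cnt E₂ (Ioo (δ:ℝ) (w:ℝ)) ≤ cnt E₂ (Icc (δ:ℝ) (w:ℝ)) :=
                  cnt_mono _ (sub_Ioo_Icc le_rfl le_rfl)
                omega
              · subst hxδ
                have hE := hmid x w (by omega) hx2 (by omega)
                have hs := hsplit (Ioo (x:ℝ) (w:ℝ))
                have hmono : cnt E₂ (Ioo (x:ℝ) (w:ℝ)) ≤ cnt E₂ (Icc (x:ℝ) (w:ℝ)) :=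
                  cnt_mono _ (sub_Ioo_Icc le_rfl le_rfl)
                omega
              · -- δ < x < w : prefix [δ,x) + rich (x,w)
                have hprefix := hpj x hxδ (by omega)
                have hE := hmid x w (by omega) hx2 (by omega)
                have hs := hsplit (Ioo (x:ℝ) (w:ℝ))
                have hxr : (δ:ℝ) < (x:ℝ) := by exact_mod_cast hxδ
                have hxwr : (x:ℝ) < (w:ℝ) := by exact_mod_cast hx2
                have htwo : cnt E₂ (Ico (δ:ℝ) (x:ℝ)) + cnt E₂ (Ioo (x:ℝ) (w:ℝ))
                    ≤ cnt E₂ (Icc (δ:ℝ) (w:ℝ)) := by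
                  apply cnt_two_le _ (disj_lt (fun z hz => hz.2) (fun z hz => le_of_lt hz.1))
                  exact Set.union_subset (sub_Ico_Icc le_rfl (le_of_lt hxwr))
                    (sub_Ioo_Icc (le_of_lt hxr) le_rfl)
                omega
            exact ih m N₁ N₂ γ δ w E E₁ E₂ hm hNγ hγδ hwδ (by omega) hsplit hmid hanc hmass'
              (by omega)
        · -- left-type failure of E₁ on [γ, y₀]
          push_neg at hc2
          obtain ⟨w, hw1, hw2, hw3⟩ := hc2
          have hwδ : δ < w := by
            by_contra hq; push_neg at hq
            have := ISS_left' (le_of_lt hγδ) hanc w hw1 hq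
            omega
          have hwr : (δ:ℝ) < (w:ℝ) := by exact_mod_cast hwδ
          have htwo : cnt E₁ (Icc (γ:ℝ) (δ:ℝ)) + cnt E₁ (Ioo (δ:ℝ) (w:ℝ))
              ≤ cnt E₁ (Ico (γ:ℝ) (w:ℝ)) := by
            apply cnt_two_le _ (disj_le (fun z hz => hz.2) (fun z hz => hz.1))
            exact Set.union_subset (sub_Icc_Ico le_rfl hwr) (sub_Ioo_Ico' (le_of_lt hδr) le_rfl)
          have hcard := ISS_card' hanc
          have hwylt : w < y₀ := by
            rcases eq_or_lt_of_le hw2 with he | h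
            · exfalso
              have hck := hkey δ le_rfl (by omega)
              rw [he] at hw3 htwo
              omega
            · exact h
          have hE1small : cnt E₁ (Ioo (δ:ℝ) (w:ℝ)) ≤ (w - δ) - m - 1 := by omega
          have hmass' : (w - δ) + m ≤ cnt E₂ (Icc (δ:ℝ) (w:ℝ)) := by
            have hE := hmid δ w (by omega) hwδ (by omega)
            have hs := hsplit (Ioo (δ:ℝ) (w:ℝ))
            have hmono : cnt E₂ (Ioo (δ:ℝ) (w:ℝ)) ≤ cnt E₂ (Icc (δ:ℝ) (w:ℝ)) :=
              cnt_mono _ (sub_Ioo_Icc le_rfl le_rfl)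
            omega
          exact ih m N₁ N₂ γ δ w E E₁ E₂ hm hNγ hγδ hwδ (by omega) hsplit hmid hanc hmass'
            (by omega)

lemma SemiMain (m N₁ N₂ : ℤ) (E E₁ E₂ : Finset ℝ)
    (hm : 1 ≤ m) (hN : N₁ < N₂)
    (hsplit : ∀ S : Set ℝ, cnt E S = cnt E₁ S + cnt E₂ S)
    (hmid : ∀ c d : ℤ, N₁ ≤ c → c < d → d ≤ N₂ → 2*(d-c)-1 ≤ cnt E (Ioo (c:ℝ) (d:ℝ)))
    (hleft : ∀ y : ℤ, N₁ < y → y ≤ N₂ → 2*(y-N₁) + m - 1 ≤ cnt E (Ico (N₁:ℝ) (y:ℝ)))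
    (hn2 : N₂ - N₁ + m ≤ cnt E₂ (Icc (N₁:ℝ) (N₂:ℝ)))
    (hfail : (∃ y : ℤ, N₁ < y ∧ y ≤ N₂ ∧ cnt E₂ (Ico (N₁:ℝ) (y:ℝ)) ≤ y - N₁ - 1) ∨
             (∃ x y : ℤ, N₁ ≤ x ∧ x < y ∧ y ≤ N₂ ∧
               cnt E₂ (Ioo (x:ℝ) (y:ℝ)) ≤ y - x - m - 1)) :
    PairC m N₁ N₂ E₁ E₂ := by
  by_cases hM : ∃ x y : ℤ, N₁ ≤ x ∧ x < y ∧ y ≤ N₂ ∧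
      cnt E₂ (Ioo (x:ℝ) (y:ℝ)) ≤ y - x - m - 1
  · -- route via a minimal mid failure
    obtain ⟨x₁, y₁, g1, g2, g3, g4⟩ := hM
    obtain ⟨γ₁, δ₁, k1, k2, k3, k4, k5⟩ :=
      exists_min_window (fun x y => cnt E₂ (Ioo (x:ℝ) (y:ℝ)) ≤ y - x - m - 1) N₁ N₂
        (y₁ - x₁).toNat x₁ y₁ (by omega) g1 g2 g3 g4
    have hanc : IsSamplingSet m γ₁ δ₁ ((E₁ : Set ℝ) ∩ Icc (γ₁:ℝ) (δ₁:ℝ)) := by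
      apply L1 hm k1 k2 k3 hsplit hmid k4
      intro x y a1 a2 a3 a4
      have hnf := k5 x y a1 a2 a3 (by omega)
      by_contra hc; push_neg at hc; exact hnf (by omega)
    have hAB : cnt E₂ (Icc (N₁:ℝ) (N₂:ℝ)) ≤ cnt E₂ (Icc (N₁:ℝ) (γ₁:ℝ))
        + cnt E₂ (Ioo (γ₁:ℝ) (δ₁:ℝ)) + cnt E₂ (Icc (δ₁:ℝ) (N₂:ℝ)) :=
      cnt_le_three _ cov_Icc3
    by_cases hR : δ₁ < N₂ ∧ (N₂ - δ₁) + m ≤ cnt E₂ (Icc (δ₁:ℝ) (N₂:ℝ))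
    · exact UR (N₂ - δ₁).toNat m N₁ N₂ γ₁ δ₁ N₂ E E₁ E₂ hm k1 k2 hR.1 le_rfl hsplit hmid
        hanc hR.2 (by omega)
    · push_neg at hR
      have hA : (γ₁ - N₁) + m + 1 ≤ cnt E₂ (Icc (N₁:ℝ) (γ₁:ℝ)) := by
        rcases eq_or_lt_of_le k3 with he | hlt
        · have hb1 : cnt E₂ (Icc (δ₁:ℝ) (N₂:ℝ)) ≤ 1 := by
            rw [he]; exact cnt_Icc_self_le E₂ (N₂:ℝ)
          omega
        · have := hR hlt
          omega
      have hγ₁ : N₁ < γ₁ := by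
        rcases eq_or_lt_of_le k1 with he | h
        · exfalso
          rw [← he] at hA
          have := cnt_Icc_self_le E₂ (N₁:ℝ)
          omega
        · exact h
      apply Pair_negI
      apply UR (γ₁ - N₁).toNat m (-N₂) (-N₁) (-δ₁) (-γ₁) (-N₁) (negI E) (negI E₁) (negI E₂)
        hm (by omega) (by omega) (by omega) (by omega)
      · intro S; rw [cnt_negI, cnt_negI, cnt_negI]; exact hsplit _
      · intro c d u1 u2 u3
        rw [cnt_negI_Ioo]
        have := hmid (-d) (-c) (by omega) (by omega) (by omega)
        omega
      · exact ISS_negI k2 hanc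
      · rw [cnt_negI_Icc]
        have he1 : (-(-N₁) : ℤ) = N₁ := by ring
        have he2 : (-(-γ₁) : ℤ) = γ₁ := by ring
        rw [he1, he2]
        omega
      · omega
  · -- route via a minimal left failure
    have hLf : ∃ y : ℤ, N₁ < y ∧ y ≤ N₂ ∧ cnt E₂ (Ico (N₁:ℝ) (y:ℝ)) ≤ y - N₁ - 1 := by
      rcases hfail with h | h
      · exact h
      · exact absurd h hM
    obtain ⟨y₁, hy1, hy2, hy3⟩ := hLf
    obtain ⟨d₀, hd1, ⟨hd2, hd3⟩, hdmin⟩ :=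
      exists_min_int (fun y => y ≤ N₂ ∧ cnt E₂ (Ico (N₁:ℝ) (y:ℝ)) ≤ y - N₁ - 1) (N₁+1)
        (N₂ - N₁).toNat y₁ (by omega) (by omega) ⟨hy2, hy3⟩
    push_neg at hM
    have hnoMf : ∀ x y : ℤ, N₁ ≤ x → x < y → y ≤ N₂ →
        y - x - m ≤ cnt E₂ (Ioo (x:ℝ) (y:ℝ)) := by
      intro x y a1 a2 a3
      have := hM x y a1 a2 a3
      omega
    have hLmin : ∀ z : ℤ, N₁ < z → z < d₀ → z - N₁ ≤ cnt E₂ (Ico (N₁:ℝ) (z:ℝ)) := by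
      intro z h1 h2
      have hnp := hdmin z (by omega) h2
      by_contra hc; push_neg at hc; exact hnp ⟨by omega, by omega⟩
    have hanc := L1' hm (by omega : N₁ < d₀) hd2 hsplit hmid hleft hd3 hLmin hnoMf
    have hd₀N : d₀ < N₂ := by
      rcases eq_or_lt_of_le hd2 with he | h
      · exfalso
        rw [he] at hd3
        have hcov : cnt E₂ (Icc (N₁:ℝ) (N₂:ℝ)) ≤ cnt E₂ (Ico (N₁:ℝ) (N₂:ℝ))
            + cnt E₂ {(N₂:ℝ)} := cnt_le_two _ cov_Icc_Ico_s
        have := cnt_singleton_le E₂ (N₂:ℝ)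
        omega
      · exact h
    have hmass : (N₂ - d₀) + m ≤ cnt E₂ (Icc (d₀:ℝ) (N₂:ℝ)) := by
      have hcov : cnt E₂ (Icc (N₁:ℝ) (N₂:ℝ)) ≤ cnt E₂ (Ico (N₁:ℝ) (d₀:ℝ))
          + cnt E₂ (Icc (d₀:ℝ) (N₂:ℝ)) := cnt_le_two _ cov_Icc_Ico_Icc
      omega
    exact UR (N₂ - d₀).toNat m N₁ N₂ N₁ d₀ N₂ E E₁ E₂ hm le_rfl (by omega) hd₀N le_rfl
      hsplit hmid hanc hmass (by omega)

/-- for a set satisfying the local phaseless sampling counting conditions,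
split into two parts with the larger one not a sampling set, there are two integer
intervals meeting in a single point on which the respective parts are sampling sets. -/
theorem stmt_14 (m : ℕ) (hm : 1 ≤ m) (N₁ N₂ : ℤ) (hN : N₁ < N₂)
    (E E₁ E₂ : Finset ℝ) (hE : (E : Set ℝ) ⊆ Set.Icc (N₁ : ℝ) (N₂ : ℝ))
    (hcard : 2 * (N₂ - N₁ + m) - 1 ≤ (E.card : ℤ))
    (hleft : ∀ k : ℤ, 1 ≤ k → k ≤ N₂ - N₁ →
      2 * k + m - 1 ≤ (((E : Set ℝ) ∩ Set.Ico (N₁ : ℝ) ((N₁ : ℝ) + k)).ncard : ℤ))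
    (hright : ∀ k : ℤ, 1 ≤ k → k ≤ N₂ - N₁ →
      2 * k + m - 1 ≤ (((E : Set ℝ) ∩ Set.Ioc ((N₂ : ℝ) - k) (N₂ : ℝ)).ncard : ℤ))
    (hmid : ∀ n₁ n₂ : ℤ, N₁ ≤ n₁ → n₁ < n₂ → n₂ ≤ N₂ →
      2 * (n₂ - n₁) - 1 ≤ (((E : Set ℝ) ∩ Set.Ioo (n₁ : ℝ) (n₂ : ℝ)).ncard : ℤ))
    (hunion : E₁ ∪ E₂ = E) (hdisj : Disjoint E₁ E₂) (hle : E₁.card ≤ E₂.card)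
    (hnotsamp : ¬ IsSamplingSet m N₁ N₂ (E₂ : Set ℝ)) :
    ∃ i₁ i₁' i₂ i₂' : ℤ, N₁ ≤ i₁ ∧ i₁ < i₁' ∧ N₁ ≤ i₂ ∧ i₂ < i₂' ∧ i₁' ≤ N₂ ∧ i₂' ≤ N₂ ∧
      (∃ p : ℤ, Set.Icc i₁ i₁' ∩ Set.Icc i₂ i₂' = {p}) ∧
      IsSamplingSet m i₁ i₁' ((E₁ : Set ℝ) ∩ Set.Icc (i₁ : ℝ) (i₁' : ℝ)) ∧
      IsSamplingSet m i₂ i₂' ((E₂ : Set ℝ) ∩ Set.Icc (i₂ : ℝ) (i₂' : ℝ)) := by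
  have hm' : (1 : ℤ) ≤ (m : ℤ) := by exact_mod_cast hm
  -- split of counts
  have hsplit : ∀ S : Set ℝ, cnt E S = cnt E₁ S + cnt E₂ S := by
    intro S
    unfold cnt
    have hcoe : (E : Set ℝ) = (E₁ : Set ℝ) ∪ (E₂ : Set ℝ) := by
      rw [← hunion]; simp
    have hdisj' : Disjoint ((E₁ : Set ℝ) ∩ S) ((E₂ : Set ℝ) ∩ S) :=
      (Finset.disjoint_coe.2 hdisj).mono inf_le_left inf_le_left
    rw [hcoe, Set.union_inter_distrib_right,
      Set.ncard_union_eq hdisj' (E₁.finite_toSet.inter_of_left _)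
        (E₂.finite_toSet.inter_of_left _)]
    push_cast; ring
  -- hypotheses in cnt form
  have hmid' : ∀ c d : ℤ, N₁ ≤ c → c < d → d ≤ N₂ →
      2*(d-c)-1 ≤ cnt E (Ioo (c:ℝ) (d:ℝ)) := fun c d h1 h2 h3 => hmid c d h1 h2 h3
  have hleft' : ∀ y : ℤ, N₁ < y → y ≤ N₂ →
      2*(y-N₁) + (m:ℤ) - 1 ≤ cnt E (Ico (N₁:ℝ) (y:ℝ)) := by
    intro y h1 h2
    have hl := hleft (y - N₁) (by omega) (by omega)
    rw [show (N₁:ℝ) + ((y - N₁ : ℤ):ℝ) = (y:ℝ) by push_cast; ring] at hl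
    exact hl
  have hright' : ∀ x : ℤ, N₁ ≤ x → x < N₂ →
      2*(N₂-x) + (m:ℤ) - 1 ≤ cnt E (Ioc (x:ℝ) (N₂:ℝ)) := by
    intro x h1 h2
    have hl := hright (N₂ - x) (by omega) (by omega)
    rw [show (N₂:ℝ) - ((N₂ - x : ℤ):ℝ) = (x:ℝ) by push_cast; ring] at hl
    exact hl
  -- cardinality of E₂
  have hEcard : E₁.card + E₂.card = E.card := by
    rw [← hunion]; exact (Finset.card_union_of_disjoint hdisj).symm
  have hsub2 : (E₂ : Set ℝ) ⊆ Icc (N₁:ℝ) (N₂:ℝ) := by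
    refine subset_trans ?_ hE
    exact_mod_cast Finset.coe_subset.2 (by rw [← hunion]; exact Finset.subset_union_right)
  have hn2 : N₂ - N₁ + (m:ℤ) ≤ cnt E₂ (Icc (N₁:ℝ) (N₂:ℝ)) := by
    unfold cnt
    rw [Set.inter_eq_left.2 hsub2, Set.ncard_coe_finset]
    omega
  -- extract a failure of E₂
  by_cases hM : ∃ x y : ℤ, N₁ ≤ x ∧ x < y ∧ y ≤ N₂ ∧
      cnt E₂ (Ioo (x:ℝ) (y:ℝ)) ≤ y - x - (m:ℤ) - 1
  · exact SemiMain m N₁ N₂ E E₁ E₂ hm' hN hsplit hmid' hleft' hn2 (Or.inr hM)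
  · by_cases hL : ∃ y : ℤ, N₁ < y ∧ y ≤ N₂ ∧ cnt E₂ (Ico (N₁:ℝ) (y:ℝ)) ≤ y - N₁ - 1
    · exact SemiMain m N₁ N₂ E E₁ E₂ hm' hN hsplit hmid' hleft' hn2 (Or.inl hL)
    · -- only right failures: reflect
      have hA : (N₂ - N₁ + (m:ℤ)) ≤ (((E₂ : Set ℝ)).ncard : ℤ) := by
        rw [Set.ncard_coe_finset]; omega
      have hB : ∀ k : ℤ, 0 ≤ k → k ≤ N₂ - N₁ →
          k ≤ (((E₂ : Set ℝ) ∩ Ico (N₁:ℝ) ((N₁:ℝ) + k)).ncard : ℤ) := by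
        intro k h0 hk
        rcases eq_or_lt_of_le h0 with he | hpos
        · have : (0:ℤ) ≤ (((E₂ : Set ℝ) ∩ Ico (N₁:ℝ) ((N₁:ℝ) + k)).ncard : ℤ) :=
            Int.ofNat_nonneg _
          omega
        · push_neg at hL
          have := hL (N₁ + k) (by omega) (by omega)
          rw [show ((N₁ + k : ℤ):ℝ) = (N₁:ℝ) + (k:ℝ) by push_cast; ring] at this
          unfold cnt at this
          omega
      have hD : ∀ c d : ℤ, N₁ ≤ c → c < d → d ≤ N₂ →
          d - c - (m:ℤ) ≤ (((E₂ : Set ℝ) ∩ Ioo (c:ℝ) (d:ℝ)).ncard : ℤ) := by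
        intro c d h1 h2 h3
        push_neg at hM
        have := hM c d h1 h2 h3
        unfold cnt at this
        omega
      have hC : ¬ ∀ k : ℤ, 0 ≤ k → k ≤ N₂ - N₁ →
          k ≤ (((E₂ : Set ℝ) ∩ Ioc ((N₂:ℝ) - k) (N₂:ℝ)).ncard : ℤ) := by
        intro hCC
        exact hnotsamp ⟨hA, hB, hCC, hD⟩
      push_neg at hC
      obtain ⟨k, hk0, hkN, hklt⟩ := hC
      have hk1 : 1 ≤ k := by
        rcases eq_or_lt_of_le hk0 with he | h
        · exfalso
          have : (0:ℤ) ≤ (((E₂ : Set ℝ) ∩ Ioc ((N₂:ℝ) - k) (N₂:ℝ)).ncard : ℤ) :=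
            Int.ofNat_nonneg _
          omega
        · omega
      have hkR : cnt E₂ (Ioc ((N₂ - k : ℤ):ℝ) ((N₂:ℤ):ℝ)) ≤ k - 1 := by
        unfold cnt
        rw [show ((N₂ - k : ℤ):ℝ) = (N₂:ℝ) - (k:ℝ) by push_cast; ring]
        push_cast
        omega
      apply Pair_negI
      apply SemiMain m (-N₂) (-N₁) (negI E) (negI E₁) (negI E₂) hm' (by omega)
      · intro S; rw [cnt_negI, cnt_negI, cnt_negI]; exact hsplit _
      · intro c d u1 u2 u3
        rw [cnt_negI_Ioo]
        have := hmid' (-d) (-c) (by omega) (by omega) (by omega)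
        omega
      · intro y h1 h2
        rw [cnt_negI_Ico]
        have he2 : (-(-N₂) : ℤ) = N₂ := by ring
        rw [he2]
        have := hright' (-y) (by omega) (by omega)
        omega
      · rw [cnt_negI_Icc]
        have he1 : (-(-N₁) : ℤ) = N₁ := by ring
        have he2 : (-(-N₂) : ℤ) = N₂ := by ring
        rw [he1, he2]
        omega
      · left
        refine ⟨-(N₂ - k), by omega, by omega, ?_⟩
        rw [cnt_negI_Ico]
        have he2 : (-(-N₂) : ℤ) = N₂ := by ring
        have he3 : (-(-(N₂ - k)) : ℤ) = N₂ - k := by ring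
        rw [he2, he3]
        omega
end

section
/- Let m ≥ 2 and let E ⊂ ℝ be a set of distinct points satisfying #(E ∩ (n_1, n_2)) ≥ 2(n_2−n_1)−1 for all integers n_1 < n_2. Then the following are equivalent: (a) for every integer n_0 there exist integers n_2 > n_1 ≥ n_0 with #(E ∩ [n_1, n_2]) ≥ 2(n_2−n_1+m)−1, and integers i_1 < i_2 ≤ n_0 with #(E ∩ [i_1, i_2]) ≥ 2(i_2−i_1+m)−1; (b) for every integer n_0, sup_{n > n_0} (#(E ∩ [n_0, n]) − 2(n−n_0)) = ∞ and sup_{n < n_0} (#(E ∩ [n, n_0]) − 2(n_0−n)) = ∞; (c) for every integer n_0, lim_{n→∞} (#(E ∩ [n_0, n]) − 2(n−n_0)) = ∞ and lim_{n→−∞} (#(E ∩ [n, n_0]) − 2(n_0−n)) = ∞. -/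
open Filter

private lemma finIcc15 (E : Set ℝ)
    (hP1 : ∀ n₁ n₂ : ℤ, n₁ < n₂ →
      2 * (n₂ - n₁) - 1 ≤ ((E ∩ Set.Ioo (n₁ : ℝ) (n₂ : ℝ)).ncard : ℤ)) :
    ∀ a b : ℝ, (E ∩ Set.Icc a b).Finite := by
  intro a b
  rcases le_or_gt a b with hab | hab
  · by_contra h
    set n₁ : ℤ := ⌊a⌋ - 1 with hn₁
    set n₂ : ℤ := ⌈b⌉ + 1 with hn₂
    have h1 : (n₁ : ℝ) < a := by
      have := Int.floor_le a
      push_cast [hn₁]; linarith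
    have h2 : b < (n₂ : ℝ) := by
      have := Int.le_ceil b
      push_cast [hn₂]; linarith
    have hsub : E ∩ Set.Icc a b ⊆ E ∩ Set.Ioo (n₁:ℝ) (n₂:ℝ) := by
      intro x hx
      exact ⟨hx.1, lt_of_lt_of_le h1 hx.2.1, lt_of_le_of_lt hx.2.2 h2⟩
    have hinf : (E ∩ Set.Ioo (n₁:ℝ) (n₂:ℝ)).Infinite :=
      Set.Infinite.mono hsub h
    have hlt : n₁ < n₂ := by
      have hfc : (n₁ : ℝ) < (n₂ : ℝ) := lt_of_lt_of_le h1 (le_of_lt (lt_of_le_of_lt hab h2))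
      exact_mod_cast hfc
    have := hP1 n₁ n₂ hlt
    rw [hinf.ncard] at this
    simp at this
    omega
  · rw [Set.Icc_eq_empty (not_le.mpr hab), Set.inter_empty]
    exact Set.finite_empty

private lemma glueG15 (E : Set ℝ)
    (hP1 : ∀ n₁ n₂ : ℤ, n₁ < n₂ →
      2 * (n₂ - n₁) - 1 ≤ ((E ∩ Set.Ioo (n₁ : ℝ) (n₂ : ℝ)).ncard : ℤ))
    (p q r s : ℤ) (hpq : p ≤ q) (hqr : q ≤ r) (hrs : r ≤ s) :
    ((E ∩ Set.Icc (p:ℝ) (q:ℝ)).ncard : ℤ) + 2*(r - q) - 1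
      + ((E ∩ Set.Icc (r:ℝ) (s:ℝ)).ncard : ℤ)
      ≤ ((E ∩ Set.Icc (p:ℝ) (s:ℝ)).ncard : ℤ) := by
  have hF := finIcc15 E hP1
  have hps : (p:ℝ) ≤ (s:ℝ) := by exact_mod_cast hpq.trans (hqr.trans hrs)
  rcases eq_or_lt_of_le hqr with rfl | hqr'
  · -- q = r : inclusion-exclusion
    set A := E ∩ Set.Icc (p:ℝ) (q:ℝ)
    set C := E ∩ Set.Icc (q:ℝ) (s:ℝ)
    have hAC : A ∩ C ⊆ {(q:ℝ)} := by
      rintro x ⟨⟨-, -, hx1⟩, -, hx2, -⟩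
      exact le_antisymm hx1 hx2
    have hACcard : (A ∩ C).ncard ≤ 1 := by
      calc (A ∩ C).ncard ≤ ({(q:ℝ)} : Set ℝ).ncard :=
            Set.ncard_le_ncard hAC (Set.finite_singleton _)
        _ = 1 := Set.ncard_singleton _
    have hIE := Set.ncard_union_add_ncard_inter A C (hF _ _) (hF _ _)
    have hsub : A ∪ C ⊆ E ∩ Set.Icc (p:ℝ) (s:ℝ) := by
      rintro x (⟨hE, h1, h2⟩ | ⟨hE, h1, h2⟩)
      · exact ⟨hE, h1, h2.trans (by exact_mod_cast hrs)⟩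
      · exact ⟨hE, (by exact_mod_cast hpq : (p:ℝ) ≤ (q:ℝ)).trans h1, h2⟩
    have hmono := Set.ncard_le_ncard hsub (hF _ _)
    have hIE' : (A ∪ C).ncard + (A ∩ C).ncard = A.ncard + C.ncard := hIE
    have h1 : (A.ncard : ℤ) + (C.ncard : ℤ) - 1 ≤ ((A ∪ C).ncard : ℤ) := by
      have := hIE'
      omega
    have h2 : ((A ∪ C).ncard : ℤ) ≤ ((E ∩ Set.Icc (p:ℝ) (s:ℝ)).ncard : ℤ) := by
      exact_mod_cast hmono
    push_cast at h1 h2 ⊢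
    linarith
  · -- q < r : three disjoint pieces
    set A := E ∩ Set.Icc (p:ℝ) (q:ℝ)
    set B := E ∩ Set.Ioo (q:ℝ) (r:ℝ)
    set C := E ∩ Set.Icc (r:ℝ) (s:ℝ)
    have hqr'' : (q:ℝ) < (r:ℝ) := by exact_mod_cast hqr'
    have hBfin : B.Finite := by
      apply Set.Finite.subset (hF (q:ℝ) (r:ℝ))
      rintro x ⟨hE, h1, h2⟩
      exact ⟨hE, h1.le, h2.le⟩
    have hdAB : Disjoint A B := by
      rw [Set.disjoint_left]
      rintro x ⟨-, -, h1⟩ ⟨-, h2, -⟩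
      linarith
    have hdABC : Disjoint (A ∪ B) C := by
      rw [Set.disjoint_left]
      rintro x (⟨-, -, h1⟩ | ⟨-, -, h1⟩) ⟨-, h2, -⟩ <;> linarith
    have hcard1 : (A ∪ B).ncard = A.ncard + B.ncard :=
      Set.ncard_union_eq hdAB (hF _ _) hBfin
    have hcard2 : ((A ∪ B) ∪ C).ncard = (A ∪ B).ncard + C.ncard :=
      Set.ncard_union_eq hdABC ((hF _ _).union hBfin) (hF _ _)
    have hsub : (A ∪ B) ∪ C ⊆ E ∩ Set.Icc (p:ℝ) (s:ℝ) := by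
      have hrs' : (r:ℝ) ≤ (s:ℝ) := by exact_mod_cast hrs
      have hpq' : (p:ℝ) ≤ (q:ℝ) := by exact_mod_cast hpq
      rintro x ((⟨hE, h1, h2⟩ | ⟨hE, h1, h2⟩) | ⟨hE, h1, h2⟩)
      · exact ⟨hE, h1, h2.trans (hqr''.le.trans hrs')⟩
      · exact ⟨hE, hpq'.trans h1.le, h2.le.trans hrs'⟩
      · exact ⟨hE, hpq'.trans (hqr''.le.trans h1), h2⟩
    have hmono := Set.ncard_le_ncard hsub (hF _ _)
    have hB := hP1 q r hqr'
    have hchain : (A.ncard : ℤ) + (B.ncard : ℤ) + (C.ncard : ℤ)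
        ≤ ((E ∩ Set.Icc (p:ℝ) (s:ℝ)).ncard : ℤ) := by
      have : ((A ∪ B) ∪ C).ncard = A.ncard + B.ncard + C.ncard := by
        rw [hcard2, hcard1]
      rw [this] at hmono
      exact_mod_cast hmono
    linarith

/-- for a set satisfying (P1), the three formulations of condition (P2)
(existence of rich intervals on both sides / unbounded excess / divergent excess) are
equivalent. -/
theorem stmt_15 (m : ℕ) (hm : 2 ≤ m) (E : Set ℝ)
    (hP1 : ∀ n₁ n₂ : ℤ, n₁ < n₂ →
      2 * (n₂ - n₁) - 1 ≤ ((E ∩ Set.Ioo (n₁ : ℝ) (n₂ : ℝ)).ncard : ℤ)) :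
    ((∀ n₀ : ℤ,
        (∃ n₁ n₂ : ℤ, n₀ ≤ n₁ ∧ n₁ < n₂ ∧
          2 * (n₂ - n₁ + m) - 1 ≤ ((E ∩ Set.Icc (n₁ : ℝ) (n₂ : ℝ)).ncard : ℤ)) ∧
        (∃ i₁ i₂ : ℤ, i₁ < i₂ ∧ i₂ ≤ n₀ ∧
          2 * (i₂ - i₁ + m) - 1 ≤ ((E ∩ Set.Icc (i₁ : ℝ) (i₂ : ℝ)).ncard : ℤ))) ↔
      (∀ n₀ M : ℤ,
        (∃ n : ℤ, n₀ < n ∧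
          M ≤ ((E ∩ Set.Icc (n₀ : ℝ) (n : ℝ)).ncard : ℤ) - 2 * (n - n₀)) ∧
        (∃ n : ℤ, n < n₀ ∧
          M ≤ ((E ∩ Set.Icc (n : ℝ) (n₀ : ℝ)).ncard : ℤ) - 2 * (n₀ - n)))) ∧
    ((∀ n₀ M : ℤ,
        (∃ n : ℤ, n₀ < n ∧
          M ≤ ((E ∩ Set.Icc (n₀ : ℝ) (n : ℝ)).ncard : ℤ) - 2 * (n - n₀)) ∧
        (∃ n : ℤ, n < n₀ ∧
          M ≤ ((E ∩ Set.Icc (n : ℝ) (n₀ : ℝ)).ncard : ℤ) - 2 * (n₀ - n))) ↔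
      (∀ n₀ : ℤ,
        Tendsto (fun n : ℤ => ((E ∩ Set.Icc (n₀ : ℝ) (n : ℝ)).ncard : ℤ) - 2 * (n - n₀))
          atTop atTop ∧
        Tendsto (fun n : ℤ => ((E ∩ Set.Icc (n : ℝ) (n₀ : ℝ)).ncard : ℤ) - 2 * (n₀ - n))
          atBot atTop)) := by
  have hm' : (2:ℤ) ≤ (m:ℤ) := by exact_mod_cast hm
  have G := glueG15 E hP1
  have hN : ∀ a b : ℤ, (0:ℤ) ≤ ((E ∩ Set.Icc (a:ℝ) (b:ℝ)).ncard : ℤ) := by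
    intro a b; positivity
  constructor
  · constructor
    · -- (a) → (b)
      intro ha n₀ M
      constructor
      · have key : ∀ k : ℕ, ∃ n : ℤ, n₀ < n ∧
            (k:ℤ) ≤ ((E ∩ Set.Icc (n₀:ℝ) (n:ℝ)).ncard : ℤ) - 2*(n - n₀) := by
          intro k
          induction k with
          | zero =>
            obtain ⟨n₁, n₂, h1, h2, h3⟩ := (ha n₀).1
            refine ⟨n₂, lt_of_le_of_lt h1 h2, ?_⟩
            have hg := G n₀ n₀ n₁ n₂ le_rfl h1 h2.le
            have h0 := hN n₀ n₀
            push_cast at h3 ⊢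
            linarith
          | succ k ih =>
            obtain ⟨n, hn, hk⟩ := ih
            obtain ⟨n₁, n₂, h1, h2, h3⟩ := (ha n).1
            refine ⟨n₂, lt_trans hn (lt_of_le_of_lt h1 h2), ?_⟩
            have hg := G n₀ n n₁ n₂ hn.le h1 h2.le
            push_cast at h3 hk ⊢
            linarith
        obtain ⟨n, hn, h⟩ := key M.toNat
        exact ⟨n, hn, le_trans (Int.self_le_toNat M) h⟩
      · have key : ∀ k : ℕ, ∃ n : ℤ, n < n₀ ∧
            (k:ℤ) ≤ ((E ∩ Set.Icc (n:ℝ) (n₀:ℝ)).ncard : ℤ) - 2*(n₀ - n) := by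
          intro k
          induction k with
          | zero =>
            obtain ⟨i₁, i₂, h1, h2, h3⟩ := (ha n₀).2
            refine ⟨i₁, lt_of_lt_of_le h1 h2, ?_⟩
            have hg := G i₁ i₂ n₀ n₀ h1.le h2 le_rfl
            have h0 := hN n₀ n₀
            push_cast at h3 ⊢
            linarith
          | succ k ih =>
            obtain ⟨n, hn, hk⟩ := ih
            obtain ⟨i₁, i₂, h1, h2, h3⟩ := (ha n).2
            refine ⟨i₁, lt_trans (lt_of_lt_of_le h1 h2) hn, ?_⟩
            have hg := G i₁ i₂ n n₀ h1.le h2 hn.le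
            push_cast at h3 hk ⊢
            linarith
        obtain ⟨n, hn, h⟩ := key M.toNat
        exact ⟨n, hn, le_trans (Int.self_le_toNat M) h⟩
    · -- (b) → (a)
      intro hb n₀
      constructor
      · obtain ⟨n, hn, h⟩ := (hb n₀ (2*(m:ℤ) - 1)).1
        refine ⟨n₀, n, le_rfl, hn, ?_⟩
        linarith
      · obtain ⟨n, hn, h⟩ := (hb n₀ (2*(m:ℤ) - 1)).2
        refine ⟨n, n₀, hn, le_rfl, ?_⟩
        linarith
  · constructor
    · -- (b) → (c)
      intro hb n₀
      constructor
      · rw [tendsto_atTop_atTop]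
        intro M
        obtain ⟨n₁, hn₁, h⟩ := (hb n₀ (M+1)).1
        refine ⟨n₁, fun n hn => ?_⟩
        have hg := G n₀ n₁ n n hn₁.le hn le_rfl
        have h0 := hN n n
        linarith
      · rw [tendsto_atBot_atTop]
        intro M
        obtain ⟨n₁, hn₁, h⟩ := (hb n₀ (M+1)).2
        refine ⟨n₁, fun n hn => ?_⟩
        have hg := G n n n₁ n₀ le_rfl hn hn₁.le
        have h0 := hN n n
        linarith
    · -- (c) → (b)
      intro hc n₀ M
      constructor
      · obtain ⟨n, hM, hn⟩ :=
          (((hc n₀).1.eventually_ge_atTop M).and (eventually_gt_atTop n₀)).exists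
        exact ⟨n, hn, hM⟩
      · obtain ⟨n, hM, hn⟩ :=
          (((hc n₀).2.eventually_ge_atTop M).and (eventually_lt_atBot n₀)).exists
        exact ⟨n, hn, hM⟩
end

section
/- Let m ≥ 2 and α, β real with α > β ≥ 0. The arithmetic progression E = {nα + β : n ∈ ℤ} satisfies both conditions (P1): #(E ∩ (n_1, n_2)) ≥ 2(n_2−n_1)−1 for all integers n_1 < n_2, and (P2): for every integer n_0 there exist n_2 > n_1 ≥ n_0 with #(E ∩ [n_1, n_2]) ≥ 2(n_2−n_1+m)−1 and i_1 < i_2 ≤ n_0 with #(E ∩ [i_1, i_2]) ≥ 2(i_2−i_1+m)−1, if and only if 0 < α < 1/2. -/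
lemma ap_inj {α β : ℝ} (hα : 0 < α) :
    Function.Injective (fun n : ℤ => (n : ℝ) * α + β) := by
  intro a b h
  simp only [add_left_inj] at h
  have := mul_right_cancel₀ (ne_of_gt hα) h
  exact_mod_cast this

lemma count_Ioo {α β : ℝ} (hα : 0 < α) (x y : ℝ) :
    (((Set.range fun n : ℤ => (n : ℝ) * α + β) ∩ Set.Ioo x y).ncard : ℤ)
      = (⌈(y - β) / α⌉ - ⌊(x - β) / α⌋ - 1).toNat := by
  have hS : (fun n : ℤ => (n : ℝ) * α + β) ⁻¹' Set.Ioo x y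
      = ↑(Finset.Ioo ⌊(x - β) / α⌋ ⌈(y - β) / α⌉) := by
    ext n
    simp only [Set.mem_preimage, Set.mem_Ioo, Finset.coe_Ioo, Int.floor_lt, Int.lt_ceil,
      div_lt_iff₀ hα, lt_div_iff₀ hα]
    constructor
    · rintro ⟨h1, h2⟩; exact ⟨by linarith, by linarith⟩
    · rintro ⟨h1, h2⟩; exact ⟨by linarith, by linarith⟩
  rw [← Set.image_preimage_eq_range_inter, hS,
    Set.ncard_image_of_injective _ (ap_inj hα), Set.ncard_coe_finset, Int.card_Ioo]

lemma count_Icc {α β : ℝ} (hα : 0 < α) (x y : ℝ) :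
    (((Set.range fun n : ℤ => (n : ℝ) * α + β) ∩ Set.Icc x y).ncard : ℤ)
      = (⌊(y - β) / α⌋ + 1 - ⌈(x - β) / α⌉).toNat := by
  have hS : (fun n : ℤ => (n : ℝ) * α + β) ⁻¹' Set.Icc x y
      = ↑(Finset.Icc ⌈(x - β) / α⌉ ⌊(y - β) / α⌋) := by
    ext n
    simp only [Set.mem_preimage, Set.mem_Icc, Finset.coe_Icc, Int.ceil_le, Int.le_floor,
      div_le_iff₀ hα, le_div_iff₀ hα]
    constructor
    · rintro ⟨h1, h2⟩; exact ⟨by linarith, by linarith⟩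
    · rintro ⟨h1, h2⟩; exact ⟨by linarith, by linarith⟩
  rw [← Set.image_preimage_eq_range_inter, hS,
    Set.ncard_image_of_injective _ (ap_inj hα), Set.ncard_coe_finset, Int.card_Icc]

/-- the arithmetic progression `{nα + β : n ∈ ℤ}` satisfies the global
phaseless sampling conditions (P1) and (P2) for `m ≥ 2` iff `0 < α < 1/2`. -/
theorem stmt_16 (m : ℕ) (hm : 2 ≤ m) (α β : ℝ) (hαβ : β < α) (hβ : 0 ≤ β) :
    ((∀ n₁ n₂ : ℤ, n₁ < n₂ →
        2 * (n₂ - n₁) - 1 ≤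
          (((Set.range fun n : ℤ => (n : ℝ) * α + β) ∩
            Set.Ioo (n₁ : ℝ) (n₂ : ℝ)).ncard : ℤ)) ∧
      (∀ n₀ : ℤ,
        (∃ n₁ n₂ : ℤ, n₀ ≤ n₁ ∧ n₁ < n₂ ∧
          2 * (n₂ - n₁ + m) - 1 ≤
            (((Set.range fun n : ℤ => (n : ℝ) * α + β) ∩
              Set.Icc (n₁ : ℝ) (n₂ : ℝ)).ncard : ℤ)) ∧
        (∃ i₁ i₂ : ℤ, i₁ < i₂ ∧ i₂ ≤ n₀ ∧
          2 * (i₂ - i₁ + m) - 1 ≤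
            (((Set.range fun n : ℤ => (n : ℝ) * α + β) ∩
              Set.Icc (i₁ : ℝ) (i₂ : ℝ)).ncard : ℤ)))) ↔
    (0 < α ∧ α < 1 / 2) := by
  have hα : 0 < α := lt_of_le_of_lt hβ hαβ
  constructor
  · rintro ⟨hP1, hP2⟩
    refine ⟨hα, ?_⟩
    have key : ∀ L : ℤ, 1 ≤ L → (2 * (L : ℝ) - 2) * α ≤ (L : ℝ) := by
      intro L hL1
      have h := hP1 0 L (by omega)
      rw [count_Ioo hα] at h
      set a := ⌊(((0:ℤ):ℝ) - β) / α⌋ with ha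
      set b := ⌈(((L:ℤ):ℝ) - β) / α⌉ with hb
      have h1 : (b : ℝ) < (((L:ℤ):ℝ) - β) / α + 1 := Int.ceil_lt_add_one _
      have h2 : (((0:ℤ):ℝ) - β) / α - 1 < (a : ℝ) := Int.sub_one_lt_floor _
      have hle : (2 * L - 1 : ℤ) ≤ b - a - 1 := by omega
      have hcast : ((2 * L - 1 : ℤ) : ℝ) ≤ ((b - a - 1 : ℤ) : ℝ) := by exact_mod_cast hle
      push_cast at hcast h1 h2
      have hdiv : ((L:ℝ) - β) / α - ((0:ℝ) - β) / α = (L : ℝ) / α := by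
        field_simp
        ring
      have h4 : 2 * (L : ℝ) - 2 ≤ (L : ℝ) / α := by linarith
      rw [le_div_iff₀ hα] at h4
      exact h4
    have hhalf : α ≤ 1 / 2 := by
      by_contra hc
      push_neg at hc
      obtain ⟨L, hL⟩ := exists_int_gt (max 1 (2 * α / (2 * α - 1)))
      have hL1 : (1 : ℤ) ≤ L := by
        have : (1:ℝ) < (L:ℝ) := lt_of_le_of_lt (le_max_left _ _) hL
        exact_mod_cast le_of_lt this
      have hL2 : 2 * α / (2 * α - 1) < (L:ℝ) := lt_of_le_of_lt (le_max_right _ _) hL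
      rw [div_lt_iff₀ (by linarith)] at hL2
      have := key L hL1
      nlinarith
    rcases lt_or_eq_of_le hhalf with h | h
    · exact h
    · exfalso
      obtain ⟨⟨n₁, n₂, _, hlt, hcount⟩, _⟩ := hP2 0
      rw [count_Icc hα] at hcount
      set a := ⌈((n₁:ℝ) - β) / α⌉ with ha
      set b := ⌊((n₂:ℝ) - β) / α⌋ with hb
      have h1 : (b : ℝ) ≤ ((n₂:ℝ) - β) / α := Int.floor_le _
      have h2 : ((n₁:ℝ) - β) / α ≤ (a : ℝ) := Int.le_ceil _
      have h3 : ((n₂:ℝ) - β) / α - ((n₁:ℝ) - β) / α = ((n₂:ℝ) - (n₁:ℝ)) / α := by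
        field_simp
        ring
      have hle : (2 * (n₂ - n₁ + m) - 1 : ℤ) ≤ b + 1 - a := by omega
      have hcast : ((2 * (n₂ - n₁ + m) - 1 : ℤ) : ℝ) ≤ ((b + 1 - a : ℤ) : ℝ) := by
        exact_mod_cast hle
      push_cast at hcast
      subst h
      have hdiv : ((n₂:ℝ) - (n₁:ℝ)) / (1/2) = 2 * ((n₂:ℝ) - (n₁:ℝ)) := by ring
      have hmr : (2:ℝ) ≤ (m:ℝ) := by exact_mod_cast hm
      linarith
  · rintro ⟨_, hhalf⟩
    constructor
    · intro n₁ n₂ hlt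
      rw [count_Ioo hα]
      set a := ⌊((n₁:ℝ) - β) / α⌋ with ha
      set b := ⌈((n₂:ℝ) - β) / α⌉ with hb
      have h1 : ((n₂:ℝ) - β) / α ≤ (b : ℝ) := Int.le_ceil _
      have h2 : (a : ℝ) ≤ ((n₁:ℝ) - β) / α := Int.floor_le _
      have h3 : ((n₂:ℝ) - β) / α - ((n₁:ℝ) - β) / α = ((n₂:ℝ) - (n₁:ℝ)) / α := by field_simp; ring
      have hL : (1:ℝ) ≤ ((n₂:ℝ) - (n₁:ℝ)) := by
        have : (1:ℤ) ≤ n₂ - n₁ := by omega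
        exact_mod_cast this
      have hbig : 2 * ((n₂:ℝ) - (n₁:ℝ)) < ((n₂:ℝ) - (n₁:ℝ)) / α := by
        rw [lt_div_iff₀ hα]
        nlinarith
      have key : ((2 * (n₂ - n₁) - 1 : ℤ) : ℝ) < ((b - a - 1 : ℤ) : ℝ) + 1 := by
        push_cast
        linarith
      have key' : (2 * (n₂ - n₁) - 1 : ℤ) < (b - a - 1) + 1 := by exact_mod_cast key
      omega
    · intro n₀
      obtain ⟨L, hL⟩ := exists_int_gt (max 1 (2 * (m:ℝ) * α / (1 - 2 * α)))
      have h2α : (0:ℝ) < 1 - 2 * α := by linarith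
      have hL1 : (1 : ℤ) ≤ L := by
        have : (1:ℝ) < (L:ℝ) := lt_of_le_of_lt (le_max_left _ _) hL
        exact_mod_cast le_of_lt this
      have hL2 : 2 * (m:ℝ) * α / (1 - 2 * α) < (L:ℝ) := lt_of_le_of_lt (le_max_right _ _) hL
      rw [div_lt_iff₀ h2α] at hL2
      have hkey : ∀ x y : ℤ, y - x = L →
          2 * (y - x + m) - 1 ≤
            (((Set.range fun n : ℤ => (n : ℝ) * α + β) ∩
              Set.Icc (x : ℝ) (y : ℝ)).ncard : ℤ) := by
        intro x y hxy
        rw [count_Icc hα]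
        set a := ⌈((x:ℝ) - β) / α⌉ with ha
        set b := ⌊((y:ℝ) - β) / α⌋ with hb
        have h1 : ((y:ℝ) - β) / α - 1 < (b : ℝ) := Int.sub_one_lt_floor _
        have h2 : (a : ℝ) < ((x:ℝ) - β) / α + 1 := Int.ceil_lt_add_one _
        have h3 : ((y:ℝ) - β) / α - ((x:ℝ) - β) / α = ((y:ℝ) - (x:ℝ)) / α := by field_simp; ring
        have hLr : ((y:ℝ) - (x:ℝ)) = (L:ℝ) := by exact_mod_cast hxy
        have hbig : 2 * (L:ℝ) + 2 * (m:ℝ) < (L:ℝ) / α := by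
          rw [lt_div_iff₀ hα]
          nlinarith
        have key : ((2 * (y - x + m) - 1 : ℤ) : ℝ) < ((b + 1 - a : ℤ) : ℝ) := by
          push_cast
          have hyx : (y:ℝ) - (x:ℝ) = (L:ℝ) := hLr
          rw [hyx] at h3 ⊢
          linarith
        have key' : (2 * (y - x + m) - 1 : ℤ) < b + 1 - a := by exact_mod_cast key
        omega
      exact ⟨⟨n₀, n₀ + L, le_refl _, by omega, hkey n₀ (n₀ + L) (by ring)⟩,
             ⟨n₀ - L, n₀, by omega, le_refl _, hkey (n₀ - L) n₀ (by ring)⟩⟩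
end

section
/- Let m ≥ 1 and suppose E ⊂ ℝ is a phaseless sampling set for V_m (every nonseparable f ∈ V_m is determined up to a sign by (|f(x)|)_{x∈E}). Then #(E ∩ (n, n+1)) ≥ 1 for every integer n. Specifically, if E ∩ (n, n+1) = ∅ for some integer n, then the functions f_1 = Σ_{k≥n} φ_m(·−k) + Σ_{k≤n−m} φ_m(·−k) and f_2 = Σ_{k≥n} φ_m(·−k) − Σ_{k≤n−m} φ_m(·−k) satisfy: f_1 and f_2 are nonseparable, f_1 ≠ ±f_2, f_1(x) = −f_2(x) for x ≤ n, and f_1(x) = f_2(x) for x ≥ n+1, hence |f_1| = |f_2| on E. -/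
open MeasureTheory

/-- The degree-`m` B-spline: `(m+1)`-fold convolution of the indicator of `[0,1]`. -/
noncomputable def bspline : ℕ → ℝ → ℝ
  | 0 => Set.indicator (Set.Icc (0 : ℝ) 1) (fun _ => 1)
  | m + 1 => fun x => ∫ t in (0 : ℝ)..1, bspline m (x - t)

/-- The bi-infinite spline series `Σ_{n∈ℤ} cₙ φ_m(x-n)`; since `φ_m` is supported on
`[0, m+1]`, only the finitely many terms with `⌈x⌉ - m - 1 ≤ n ≤ ⌈x⌉` contribute. -/
noncomputable def splineSeries (m : ℕ) (c : ℤ → ℝ) (x : ℝ) : ℝ :=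
  ∑ n ∈ Finset.Icc (⌈x⌉ - (m : ℤ) - 1) ⌈x⌉, c n * bspline m (x - n)

/-- A function of `V_m` is separable if it is the sum of two nonzero elements of `V_m`
whose pointwise product vanishes identically. -/
def SeparableGlobal (m : ℕ) (c : ℤ → ℝ) : Prop :=
  ∃ c₁ c₂ : ℤ → ℝ,
    (∀ x : ℝ, splineSeries m c x = splineSeries m c₁ x + splineSeries m c₂ x) ∧
    (∃ x : ℝ, splineSeries m c₁ x ≠ 0) ∧ (∃ x : ℝ, splineSeries m c₂ x ≠ 0) ∧
    (∀ x : ℝ, splineSeries m c₁ x * splineSeries m c₂ x = 0)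

/-- `E` is a (global) phaseless sampling set for `V_m`: every nonseparable function in
`V_m` is determined up to a sign by its unsigned samples on `E`. -/
def IsGlobalPhaselessSamplingSet (m : ℕ) (E : Set ℝ) : Prop :=
  ∀ c c' : ℤ → ℝ, ¬ SeparableGlobal m c →
    (∀ x ∈ E, |splineSeries m c x| = |splineSeries m c' x|) →
    (∀ x : ℝ, splineSeries m c' x = splineSeries m c x) ∨
    (∀ x : ℝ, splineSeries m c' x = -splineSeries m c x)

lemma bspline_succ (m : ℕ) (x : ℝ) :
    bspline (m + 1) x = ∫ t in (0 : ℝ)..1, bspline m (x - t) := rfl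

lemma bspline_succ' (m : ℕ) (x : ℝ) :
    bspline (m + 1) x = ∫ s in (x - 1)..x, bspline m s := by
  rw [bspline_succ]
  simpa using intervalIntegral.integral_comp_sub_left (bspline m) x

lemma bspline_nonneg : ∀ (m : ℕ) (x : ℝ), 0 ≤ bspline m x
  | 0, x => Set.indicator_nonneg (fun _ _ => zero_le_one) x
  | m + 1, x => by
      rw [bspline_succ]
      exact intervalIntegral.integral_nonneg zero_le_one fun t _ => bspline_nonneg m (x - t)

lemma bspline_zero_of_lt : ∀ (m : ℕ) {x : ℝ}, x < 0 → bspline m x = 0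
  | 0, x, hx => Set.indicator_of_notMem (fun h => absurd h.1 (not_le.mpr hx)) _
  | m + 1, x, hx => by
      rw [bspline_succ]
      have h : Set.EqOn (fun t => bspline m (x - t)) (fun _ => (0 : ℝ))
          (Set.uIcc (0 : ℝ) 1) := by
        intro t ht
        rw [Set.uIcc_of_le zero_le_one] at ht
        exact bspline_zero_of_lt m (by linarith [ht.1])
      rw [intervalIntegral.integral_congr h]
      simp

lemma bspline_zero_of_gt : ∀ (m : ℕ) {x : ℝ}, (m : ℝ) + 1 < x → bspline m x = 0
  | 0, x, hx => Set.indicator_of_notMem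
      (fun h => absurd h.2 (not_le.mpr (by simpa using hx))) _
  | m + 1, x, hx => by
      rw [bspline_succ]
      have h : Set.EqOn (fun t => bspline m (x - t)) (fun _ => (0 : ℝ))
          (Set.uIcc (0 : ℝ) 1) := by
        intro t ht
        rw [Set.uIcc_of_le zero_le_one] at ht
        refine bspline_zero_of_gt m ?_
        push_cast at hx ⊢
        linarith [ht.2]
      rw [intervalIntegral.integral_congr h]
      simp

lemma bspline_succ_zero_of_nonpos (m : ℕ) {x : ℝ} (hx : x ≤ 0) : bspline (m + 1) x = 0 := by
  rw [bspline_succ, intervalIntegral.integral_of_le zero_le_one,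
    MeasureTheory.integral_Ioc_eq_integral_Ioo]
  rw [MeasureTheory.setIntegral_congr_fun (g := fun _ => (0 : ℝ)) measurableSet_Ioo
    (fun t ht => bspline_zero_of_lt m (by rcases ht with ⟨h1, h2⟩; linarith))]
  simp

lemma bspline_succ_zero_of_ge (m : ℕ) {x : ℝ} (hx : ((m : ℝ) + 1) + 1 ≤ x) :
    bspline (m + 1) x = 0 := by
  rw [bspline_succ, intervalIntegral.integral_of_le zero_le_one,
    MeasureTheory.integral_Ioc_eq_integral_Ioo]
  rw [MeasureTheory.setIntegral_congr_fun (g := fun _ => (0 : ℝ)) measurableSet_Ioo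
    (fun t ht => bspline_zero_of_gt m (by rcases ht with ⟨h1, h2⟩; linarith))]
  simp

lemma bspline_zero_of_nonpos {m : ℕ} (hm : 1 ≤ m) {x : ℝ} (hx : x ≤ 0) : bspline m x = 0 := by
  obtain ⟨k, rfl⟩ : ∃ k, m = k + 1 := ⟨m - 1, (Nat.succ_pred_eq_of_pos hm).symm⟩
  exact bspline_succ_zero_of_nonpos k hx

lemma bspline_zero_of_ge {m : ℕ} (hm : 1 ≤ m) {x : ℝ} (hx : (m : ℝ) + 1 ≤ x) :
    bspline m x = 0 := by
  obtain ⟨k, rfl⟩ : ∃ k, m = k + 1 := ⟨m - 1, (Nat.succ_pred_eq_of_pos hm).symm⟩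
  exact bspline_succ_zero_of_ge k (by push_cast at hx ⊢; linarith)

lemma bspline_integrable_zero : Integrable (bspline 0) := by
  rw [show bspline 0 = Set.indicator (Set.Icc (0 : ℝ) 1) (fun _ => 1) from rfl,
    MeasureTheory.integrable_indicator_iff measurableSet_Icc]
  exact (integrableOn_const_iff).mpr (Or.inr measure_Icc_lt_top)

lemma bspline_continuous_succ (m : ℕ)
    (hint : ∀ a b : ℝ, IntervalIntegrable (bspline m) volume a b) :
    Continuous (bspline (m + 1)) := by
  have hF : Continuous fun b => ∫ s in (0 : ℝ)..b, bspline m s :=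
    intervalIntegral.continuous_primitive hint 0
  have heq : bspline (m + 1) = fun x =>
      (∫ s in (0 : ℝ)..x, bspline m s) - ∫ s in (0 : ℝ)..(x - 1), bspline m s := by
    funext x
    rw [bspline_succ', ← intervalIntegral.integral_interval_sub_left (hint 0 x) (hint 0 (x - 1))]
  rw [heq]
  exact hF.sub (hF.comp (continuous_id.sub continuous_const))

lemma bspline_integrable : ∀ m : ℕ, Integrable (bspline m)
  | 0 => bspline_integrable_zero
  | m + 1 => by
      have hc := bspline_continuous_succ m
        (fun a b => (bspline_integrable m).intervalIntegrable)
      apply hc.integrable_of_hasCompactSupport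
      apply HasCompactSupport.intro (isCompact_Icc (a := (0 : ℝ)) (b := (m : ℝ) + 2))
      intro x hx
      rw [Set.mem_Icc, not_and_or] at hx
      rcases hx with hx | hx
      · exact bspline_zero_of_lt _ (not_le.mp hx)
      · refine bspline_zero_of_gt _ ?_
        push_cast
        linarith [not_le.mp hx]

lemma bspline_continuous {m : ℕ} (hm : 1 ≤ m) : Continuous (bspline m) := by
  obtain ⟨k, rfl⟩ : ∃ k, m = k + 1 := ⟨m - 1, (Nat.succ_pred_eq_of_pos hm).symm⟩
  exact bspline_continuous_succ k fun a b => (bspline_integrable k).intervalIntegrable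

lemma bspline_pos : ∀ (m : ℕ) {x : ℝ}, 0 < x → x < (m : ℝ) + 1 → 0 < bspline m x
  | 0, x, h0, h1 => by
      rw [show bspline 0 x = 1 from Set.indicator_of_mem (Set.mem_Icc.mpr ⟨h0.le, by push_cast at h1; linarith⟩) _]
      norm_num
  | m + 1, x, h0, h1 => by
      rw [bspline_succ']
      have h1' : x < (m : ℝ) + 2 := by push_cast at h1; linarith
      set c := max (x - 1) 0 with hc
      set d := min x ((m : ℝ) + 1) with hd
      have hcd : c < d := by
        exact max_lt (lt_min (by linarith) (by linarith)) (lt_min h0 (by positivity))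
      have hsub : 0 < ∫ s in c..d, bspline m s := by
        refine intervalIntegral.intervalIntegral_pos_of_pos_on
          ((bspline_integrable m).intervalIntegrable) (fun s hs => ?_) hcd
        exact bspline_pos m ((le_max_right (x - 1) 0).trans_lt hs.1)
          (hs.2.trans_le (min_le_right _ _))
      refine hsub.trans_le ?_
      refine intervalIntegral.integral_mono_interval (le_max_left _ _) hcd.le (min_le_left _ _)
        (Filter.Eventually.of_forall fun s => bspline_nonneg m s)
        ((bspline_integrable m).intervalIntegrable)
lemma splineSeries_eq_sum (m : ℕ) (c : ℤ → ℝ) (x : ℝ) (s : Finset ℤ)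
    (hs : Finset.Icc (⌈x⌉ - (m : ℤ) - 1) ⌈x⌉ ⊆ s) :
    splineSeries m c x = ∑ k ∈ s, c k * bspline m (x - k) := by
  rw [splineSeries]
  refine Finset.sum_subset hs fun k hk hk' => ?_
  rw [Finset.mem_Icc, not_and_or] at hk'
  rcases hk' with h | h
  · have h2 : k ≤ ⌈x⌉ - (m : ℤ) - 2 := by omega
    have hk2 : (k : ℝ) ≤ (⌈x⌉ : ℝ) - m - 2 := by exact_mod_cast h2
    have hc : (m : ℝ) + 1 < x - k := by
      have := Int.ceil_lt_add_one x
      linarith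
    rw [bspline_zero_of_gt m hc, mul_zero]
  · have hk2 : (⌈x⌉ : ℝ) + 1 ≤ (k : ℝ) := by
      have : ⌈x⌉ + 1 ≤ k := by omega
      exact_mod_cast this
    have hc : x - k < 0 := by
      have := Int.le_ceil x
      linarith
    rw [bspline_zero_of_lt m hc, mul_zero]

lemma splineSeries_continuous {m : ℕ} (hm : 1 ≤ m) (c : ℤ → ℝ) :
    Continuous (splineSeries m c) := by
  rw [continuous_iff_continuousAt]
  intro x₀
  have key : Set.EqOn (splineSeries m c)
      (fun x => ∑ k ∈ Finset.Icc (⌈x₀⌉ - (m : ℤ) - 2) (⌈x₀⌉ + 1), c k * bspline m (x - k))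
      (Set.Ioo (x₀ - 1) (x₀ + 1)) := by
    intro x hx
    refine splineSeries_eq_sum m c x _ fun k hk => ?_
    rw [Finset.mem_Icc] at hk ⊢
    have h1 : ⌈x₀⌉ - 1 ≤ ⌈x⌉ := by
      have := Int.ceil_le_ceil (R := ℝ) (le_of_lt hx.1)
      rwa [Int.ceil_sub_one] at this
    have h2 : ⌈x⌉ ≤ ⌈x₀⌉ + 1 := by
      have := Int.ceil_le_ceil (R := ℝ) (le_of_lt hx.2)
      rwa [Int.ceil_add_one] at this
    omega
  have hcont : Continuous
      (fun x => ∑ k ∈ Finset.Icc (⌈x₀⌉ - (m : ℤ) - 2) (⌈x₀⌉ + 1), c k * bspline m (x - k)) := by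
    refine continuous_finset_sum _ fun k _ => ?_
    exact continuous_const.mul ((bspline_continuous hm).comp (continuous_id.sub continuous_const))
  refine hcont.continuousAt.congr ?_
  exact Filter.eventuallyEq_of_mem (Ioo_mem_nhds (by linarith) (by linarith)) key.symm

/-- Polynomial antiderivative. -/
noncomputable def polyAnti (p : Polynomial ℝ) : Polynomial ℝ :=
  p.sum fun k a => Polynomial.C (a / (k + 1)) * Polynomial.X ^ (k + 1)

lemma polyAnti_deriv (p : Polynomial ℝ) : (polyAnti p).derivative = p := by
  rw [polyAnti, Polynomial.sum_def, Polynomial.derivative_sum]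
  conv_rhs => rw [← Polynomial.sum_C_mul_X_pow_eq p, Polynomial.sum_def]
  refine Finset.sum_congr rfl fun k _ => ?_
  rw [Polynomial.derivative_C_mul_X_pow]
  have hne : ((k : ℝ) + 1) ≠ 0 := by positivity
  have h1 : p.coeff k / ((k : ℕ) + 1 : ℝ) * ((k + 1 : ℕ) : ℝ) = p.coeff k := by
    push_cast
    field_simp
  rw [h1, Nat.add_sub_cancel]

lemma integral_poly (p : Polynomial ℝ) (a b : ℝ) :
    ∫ x in a..b, p.eval x = (polyAnti p).eval b - (polyAnti p).eval a := by
  have h1 : ∀ x ∈ Set.uIcc a b, HasDerivAt (fun y => (polyAnti p).eval y) (p.eval x) x := by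
    intro x _
    have := (polyAnti p).hasDerivAt x
    rwa [polyAnti_deriv] at this
  exact intervalIntegral.integral_eq_sub_of_hasDerivAt h1 (p.continuous.intervalIntegrable _ _)

lemma F_poly (m : ℕ) (i : ℤ)
    (hbp : ∃ p : Polynomial ℝ, ∀ x ∈ Set.Ioo (i : ℝ) ((i : ℝ) + 1), bspline m x = p.eval x) :
    ∃ q : Polynomial ℝ, ∀ x ∈ Set.Icc (i : ℝ) ((i : ℝ) + 1),
      (∫ s in (0 : ℝ)..x, bspline m s) = q.eval x := by
  obtain ⟨p, hp⟩ := hbp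
  refine ⟨Polynomial.C ((∫ s in (0 : ℝ)..(i : ℝ), bspline m s) - (polyAnti p).eval (i : ℝ))
    + polyAnti p, fun x hx => ?_⟩
  have h1 : (∫ s in (0 : ℝ)..x, bspline m s)
      = (∫ s in (0 : ℝ)..(i : ℝ), bspline m s) + ∫ s in (i : ℝ)..x, bspline m s :=
    (intervalIntegral.integral_add_adjacent_intervals
      ((bspline_integrable m).intervalIntegrable) ((bspline_integrable m).intervalIntegrable)).symm
  have h2 : (∫ s in (i : ℝ)..x, bspline m s) = ∫ s in (i : ℝ)..x, p.eval s := by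
    rw [intervalIntegral.integral_of_le hx.1, intervalIntegral.integral_of_le hx.1,
      MeasureTheory.integral_Ioc_eq_integral_Ioo, MeasureTheory.integral_Ioc_eq_integral_Ioo]
    refine MeasureTheory.setIntegral_congr_fun measurableSet_Ioo fun s hs => ?_
    exact hp s ⟨hs.1, hs.2.trans_le hx.2⟩
  rw [h1, h2, integral_poly]
  simp only [Polynomial.eval_add, Polynomial.eval_C]
  ring

lemma bspline_poly : ∀ (m : ℕ) (i : ℤ), ∃ p : Polynomial ℝ,
    ∀ x ∈ Set.Ioo (i : ℝ) ((i : ℝ) + 1), bspline m x = p.eval x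
  | 0, i => by
      by_cases hi : i = 0
      · subst hi
        refine ⟨1, fun x hx => ?_⟩
        simp only [Int.cast_zero, Set.mem_Ioo, zero_add] at hx
        rw [show bspline 0 x = 1 from Set.indicator_of_mem
          (Set.mem_Icc.mpr ⟨hx.1.le, hx.2.le⟩) _, Polynomial.eval_one]
      · refine ⟨0, fun x hx => ?_⟩
        rw [Polynomial.eval_zero]
        rcases lt_or_ge i 0 with h | h
        · refine bspline_zero_of_lt 0 ?_
          have : (i : ℝ) + 1 ≤ 0 := by exact_mod_cast (by omega : i + 1 ≤ 0)
          linarith [hx.2]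
        · refine bspline_zero_of_gt 0 ?_
          have : (1 : ℝ) ≤ (i : ℝ) := by exact_mod_cast (by omega : (1 : ℤ) ≤ i)
          push_cast
          linarith [hx.1]
  | m + 1, i => by
      obtain ⟨q, hq⟩ := F_poly m i (bspline_poly m i)
      obtain ⟨q', hq'⟩ := F_poly m (i - 1) (bspline_poly m (i - 1))
      refine ⟨q - q'.comp (Polynomial.X - Polynomial.C 1), fun x hx => ?_⟩
      have hx1 : x ∈ Set.Icc (i : ℝ) ((i : ℝ) + 1) := Set.Ioo_subset_Icc_self hx
      have hx2 : x - 1 ∈ Set.Icc ((i - 1 : ℤ) : ℝ) (((i - 1 : ℤ) : ℝ) + 1) := by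
        push_cast
        exact ⟨by linarith [hx.1], by linarith [hx.2]⟩
      rw [bspline_succ',
        ← intervalIntegral.integral_interval_sub_left
          ((bspline_integrable m).intervalIntegrable) ((bspline_integrable m).intervalIntegrable),
        hq x hx1, hq' (x - 1) hx2]
      simp [Polynomial.eval_comp]

lemma splineSeries_poly (m : ℕ) (c : ℤ → ℝ) (j : ℤ) :
    ∃ P : Polynomial ℝ, ∀ x ∈ Set.Ioo (j : ℝ) ((j : ℝ) + 1),
      splineSeries m c x = P.eval x := by
  choose p hp using bspline_poly m
  refine ⟨∑ k ∈ Finset.Icc (j - (m : ℤ)) (j + 1),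
    Polynomial.C (c k) * (p (j - k)).comp (Polynomial.X - Polynomial.C (k : ℝ)), fun x hx => ?_⟩
  have hceil : ⌈x⌉ = j + 1 := by
    rw [Int.ceil_eq_iff]
    constructor
    · push_cast; linarith [hx.1]
    · push_cast; linarith [hx.2]
  have hwin : splineSeries m c x
      = ∑ k ∈ Finset.Icc (j - (m : ℤ)) (j + 1), c k * bspline m (x - k) := by
    rw [splineSeries, hceil]
    congr 1
    congr 1 <;> omega
  rw [hwin, Polynomial.eval_finset_sum]
  refine Finset.sum_congr rfl fun k _ => ?_
  rw [Polynomial.eval_mul, Polynomial.eval_C, Polynomial.eval_comp, Polynomial.eval_sub,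
    Polynomial.eval_X, Polynomial.eval_C]
  congr 1
  refine hp (j - k) (x - k) ?_
  push_cast
  exact ⟨by linarith [hx.1], by linarith [hx.2]⟩
lemma vanish_on_connected {g h : ℝ → ℝ} (hg : Continuous g) (hh : Continuous h)
    (hprod : ∀ x, g x * h x = 0) {S : Set ℝ} (hS : IsPreconnected S)
    (hf : ∀ x ∈ S, g x + h x ≠ 0) :
    (∀ x ∈ S, g x = 0) ∨ (∀ x ∈ S, h x = 0) := by
  by_cases hcase : ∃ x ∈ S, g x ≠ 0
  · right
    have hgc : IsClosed {x : ℝ | g x = 0} := isClosed_eq hg continuous_const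
    have hhc : IsClosed {x : ℝ | h x = 0} := isClosed_eq hh continuous_const
    have hu : IsOpen {x : ℝ | g x ≠ 0} := by
      simpa [Set.compl_setOf] using hgc.isOpen_compl
    have hv : IsOpen {x : ℝ | h x ≠ 0} := by
      simpa [Set.compl_setOf] using hhc.isOpen_compl
    have hdisj : Disjoint {x : ℝ | g x ≠ 0} {x : ℝ | h x ≠ 0} := by
      rw [Set.disjoint_left]
      intro x hx1 hx2
      exact (mul_ne_zero hx1 hx2) (hprod x)
    have hcover : S ⊆ {x : ℝ | g x ≠ 0} ∪ {x : ℝ | h x ≠ 0} := by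
      intro x hx
      by_contra hc
      simp only [Set.mem_union, Set.mem_setOf_eq, not_or, not_not] at hc
      exact hf x hx (by rw [hc.1, hc.2, add_zero])
    obtain ⟨x₀, hx₀S, hx₀⟩ := hcase
    have hsub := hS.subset_left_of_subset_union hu hv hdisj hcover ⟨x₀, hx₀S, hx₀⟩
    intro x hx
    exact (mul_eq_zero.mp (hprod x)).resolve_left (hsub hx)
  · left
    push_neg at hcase
    exact hcase

lemma eqOn_Icc_of_eqOn_Ioo {u v : ℝ → ℝ} (hu : Continuous u) (hv : Continuous v) {a b : ℝ}
    (hab : a < b) (h : ∀ x ∈ Set.Ioo a b, u x = v x) : ∀ x ∈ Set.Icc a b, u x = v x := by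
  have hclosed : IsClosed {x | u x = v x} := isClosed_eq hu hv
  have hsub : Set.Icc a b ⊆ {x | u x = v x} := by
    rw [← closure_Ioo hab.ne]
    exact hclosed.closure_subset_iff.mpr h
  exact fun x hx => hsub hx

lemma zero_everywhere {g h f : ℝ → ℝ} {a b : ℝ} (hab : a < b)
    (hg : Continuous g) (hh : Continuous h)
    (hsum : ∀ x, f x = g x + h x) (hprod : ∀ x, g x * h x = 0)
    (hL : ∀ x ∈ Set.Iic a, f x ≠ 0) (hR : ∀ x ∈ Set.Ici b, f x ≠ 0)
    (hmid : ∀ x ∈ Set.Ioo a b, g x = 0) : ∀ x, g x = 0 := by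
  have hbd := eqOn_Icc_of_eqOn_Ioo hg continuous_const hab hmid
  have hga : g a = 0 := hbd a ⟨le_refl a, hab.le⟩
  have hgb : g b = 0 := hbd b ⟨hab.le, le_refl b⟩
  have hLz : ∀ x ∈ Set.Iic a, g x = 0 := by
    rcases vanish_on_connected hg hh hprod isPreconnected_Iic
        (fun x hx => by rw [← hsum x]; exact hL x hx) with H | H
    · exact H
    · intro x hx
      exfalso
      have hfa : f a = g a + h a := hsum a
      rw [hga, H a (Set.mem_Iic.mpr le_rfl), add_zero] at hfa
      exact hL a (Set.mem_Iic.mpr le_rfl) hfa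
  have hRz : ∀ x ∈ Set.Ici b, g x = 0 := by
    rcases vanish_on_connected hg hh hprod isPreconnected_Ici
        (fun x hx => by rw [← hsum x]; exact hR x hx) with H | H
    · exact H
    · intro x hx
      exfalso
      have hfb : f b = g b + h b := hsum b
      rw [hgb, H b (Set.mem_Ici.mpr le_rfl), add_zero] at hfb
      exact hR b (Set.mem_Ici.mpr le_rfl) hfb
  intro x
  rcases le_or_gt x a with hx | hx
  · exact hLz x hx
  rcases lt_or_ge x b with hx2 | hx2
  · exact hbd x ⟨hx.le, hx2.le⟩
  · exact hRz x hx2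

noncomputable def cOne (m : ℕ) (n : ℤ) : ℤ → ℝ :=
  fun k => if n ≤ k ∨ k ≤ n - m then 1 else 0

noncomputable def cTwo (m : ℕ) (n : ℤ) : ℤ → ℝ :=
  fun k => if n ≤ k then 1 else if k ≤ n - m then -1 else 0

lemma left_eq (m : ℕ) (n : ℤ) (hm : 1 ≤ m) :
    ∀ x : ℝ, x ≤ (n : ℝ) →
      splineSeries m (cOne m n) x = -splineSeries m (cTwo m n) x := by
  intro x hx
  have hz : splineSeries m (cOne m n) x + splineSeries m (cTwo m n) x = 0 := by
    rw [splineSeries, splineSeries, ← Finset.sum_add_distrib]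
    refine Finset.sum_eq_zero fun k _ => ?_
    by_cases h1 : n ≤ k
    · have hb : bspline m (x - k) = 0 := by
        refine bspline_zero_of_nonpos hm ?_
        have : (n : ℝ) ≤ (k : ℝ) := by exact_mod_cast h1
        linarith
      rw [hb]
      ring
    · by_cases h2 : k ≤ n - m
      · rw [cOne, cTwo]
        simp only [if_pos (Or.inr h2), if_neg h1, if_pos h2]
        ring
      · rw [cOne, cTwo]
        simp only [if_neg (not_or.mpr ⟨h1, h2⟩), if_neg h1, if_neg h2]
        ring
  linarith

lemma right_eq (m : ℕ) (n : ℤ) (hm : 1 ≤ m) :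
    ∀ x : ℝ, (n : ℝ) + 1 ≤ x →
      splineSeries m (cOne m n) x = splineSeries m (cTwo m n) x := by
  intro x hx
  rw [splineSeries, splineSeries]
  refine Finset.sum_congr rfl fun k _ => ?_
  by_cases h2 : k ≤ n - m
  · have hb : bspline m (x - k) = 0 := by
      refine bspline_zero_of_ge hm ?_
      have : (k : ℝ) ≤ (n : ℝ) - (m : ℝ) := by
        have h3 : ((k : ℤ) : ℝ) ≤ ((n - (m : ℤ) : ℤ) : ℝ) := by exact_mod_cast h2
        push_cast at h3
        linarith
      linarith
    rw [hb]
    ring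
  · by_cases h1 : n ≤ k
    · rw [cOne, cTwo]
      simp only [if_pos (Or.inl h1), if_pos h1]
    · rw [cOne, cTwo]
      simp only [if_neg (not_or.mpr ⟨h1, h2⟩), if_neg h1, if_neg h2]

lemma f1_pos (m : ℕ) (n : ℤ) (hm : 1 ≤ m) :
    ∀ x : ℝ, 0 < splineSeries m (cOne m n) x := by
  intro x
  have hm' : (1 : ℝ) ≤ (m : ℝ) := by exact_mod_cast hm
  rw [splineSeries]
  refine Finset.sum_pos' (fun k _ => ?_) ?_
  · refine mul_nonneg ?_ (bspline_nonneg m _)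
    rw [cOne]
    split <;> norm_num
  · -- witness
    rcases lt_or_ge (n : ℝ) x with hc | hc
    · refine ⟨⌈x⌉ - 1, Finset.mem_Icc.mpr ⟨by omega, by omega⟩, ?_⟩
      have hnk : n ≤ ⌈x⌉ - 1 := by
        have := Int.lt_ceil.mpr hc
        omega
      have hco : cOne m n (⌈x⌉ - 1) = 1 := if_pos (Or.inl hnk)
      rw [hco, one_mul]
      refine bspline_pos m ?_ ?_
      · have := Int.ceil_lt_add_one x
        push_cast
        linarith
      · have := Int.le_ceil x
        push_cast
        linarith
    · rcases lt_or_ge ((n : ℝ) - (m : ℝ)) x with hd | hd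
      · refine ⟨n - m, Finset.mem_Icc.mpr ⟨?_, ?_⟩, ?_⟩
        · have h1 : ⌈x⌉ ≤ n := Int.ceil_le.mpr (by exact_mod_cast hc)
          omega
        · have h2 : n - (m : ℤ) < ⌈x⌉ := by
            rw [Int.lt_ceil]
            push_cast
            linarith
          omega
        · have hco : cOne m n (n - m) = 1 := if_pos (Or.inr le_rfl)
          rw [hco, one_mul]
          refine bspline_pos m ?_ ?_
          · push_cast
            linarith
          · push_cast
            linarith
      · refine ⟨⌈x⌉ - 1, Finset.mem_Icc.mpr ⟨by omega, by omega⟩, ?_⟩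
        have hku : ⌈x⌉ ≤ n - m := Int.ceil_le.mpr (by push_cast; linarith)
        have hco : cOne m n (⌈x⌉ - 1) = 1 := if_pos (Or.inr (by omega))
        rw [hco, one_mul]
        refine bspline_pos m ?_ ?_
        · have := Int.ceil_lt_add_one x
          push_cast
          linarith
        · have := Int.le_ceil x
          push_cast
          linarith

lemma f2_neg (m : ℕ) (n : ℤ) (hm : 1 ≤ m) :
    ∀ x ∈ Set.Iic (n : ℝ), splineSeries m (cTwo m n) x < 0 := by
  intro x hx
  have h := left_eq m n hm x hx
  have hp := f1_pos m n hm x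
  linarith

lemma f2_pos (m : ℕ) (n : ℤ) (hm : 1 ≤ m) :
    ∀ x ∈ Set.Ici ((n : ℝ) + 1), 0 < splineSeries m (cTwo m n) x := by
  intro x hx
  have h := right_eq m n hm x hx
  have hp := f1_pos m n hm x
  linarith

lemma ex1 (m : ℕ) (n : ℤ) (hm : 1 ≤ m) :
    ∃ x : ℝ, splineSeries m (cOne m n) x ≠ splineSeries m (cTwo m n) x := by
  refine ⟨(n : ℝ), fun hEq => ?_⟩
  have h := left_eq m n hm (n : ℝ) le_rfl
  have hp := f1_pos m n hm (n : ℝ)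
  linarith

lemma ex2 (m : ℕ) (n : ℤ) (hm : 1 ≤ m) :
    ∃ x : ℝ, splineSeries m (cOne m n) x ≠ -splineSeries m (cTwo m n) x := by
  refine ⟨(n : ℝ) + 1, fun hEq => ?_⟩
  have h := right_eq m n hm ((n : ℝ) + 1) le_rfl
  have hp := f1_pos m n hm ((n : ℝ) + 1)
  linarith

lemma nonsep1 (m : ℕ) (n : ℤ) (hm : 1 ≤ m) : ¬ SeparableGlobal m (cOne m n) := by
  intro hS
  obtain ⟨d₁, d₂, hsum, ⟨x₁, hx₁⟩, ⟨x₂, hx₂⟩, hprod⟩ := hS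
  rcases vanish_on_connected (splineSeries_continuous hm d₁) (splineSeries_continuous hm d₂)
      hprod isPreconnected_univ
      (fun x _ => by rw [← hsum x]; exact (f1_pos m n hm x).ne') with H | H
  · exact hx₁ (H x₁ trivial)
  · exact hx₂ (H x₂ trivial)

lemma nonsep2 (m : ℕ) (n : ℤ) (hm : 1 ≤ m) : ¬ SeparableGlobal m (cTwo m n) := by
  intro hS
  obtain ⟨d₁, d₂, hsum, ⟨x₁, hx₁⟩, ⟨x₂, hx₂⟩, hprod⟩ := hS
  obtain ⟨P, hP⟩ := splineSeries_poly m d₁ n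
  obtain ⟨Q, hQ⟩ := splineSeries_poly m d₂ n
  have hab : (n : ℝ) < (n : ℝ) + 1 := by linarith
  have hPQ : P * Q = 0 := by
    refine Polynomial.eq_zero_of_infinite_isRoot _ ?_
    refine (Set.Ioo_infinite hab).mono ?_
    intro x hx
    simp only [Set.mem_setOf_eq, Polynomial.IsRoot, Polynomial.eval_mul]
    rw [← hP x hx, ← hQ x hx]
    exact hprod x
  have hL : ∀ x ∈ Set.Iic (n : ℝ), splineSeries m (cTwo m n) x ≠ 0 :=
    fun x hx => (f2_neg m n hm x hx).ne
  have hR : ∀ x ∈ Set.Ici ((n : ℝ) + 1), splineSeries m (cTwo m n) x ≠ 0 :=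
    fun x hx => (f2_pos m n hm x hx).ne'
  rcases mul_eq_zero.mp hPQ with h0 | h0
  · have hmid : ∀ x ∈ Set.Ioo (n : ℝ) ((n : ℝ) + 1), splineSeries m d₁ x = 0 :=
      fun x hx => by rw [hP x hx, h0, Polynomial.eval_zero]
    have := zero_everywhere hab (splineSeries_continuous hm d₁) (splineSeries_continuous hm d₂)
      hsum hprod hL hR hmid
    exact hx₁ (this x₁)
  · have hmid : ∀ x ∈ Set.Ioo (n : ℝ) ((n : ℝ) + 1), splineSeries m d₂ x = 0 :=
      fun x hx => by rw [hQ x hx, h0, Polynomial.eval_zero]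
    have hsum' : ∀ x, splineSeries m (cTwo m n) x = splineSeries m d₂ x + splineSeries m d₁ x :=
      fun x => by rw [hsum x]; ring
    have hprod' : ∀ x, splineSeries m d₂ x * splineSeries m d₁ x = 0 :=
      fun x => by rw [mul_comm]; exact hprod x
    have := zero_everywhere hab (splineSeries_continuous hm d₂) (splineSeries_continuous hm d₁)
      hsum' hprod' hL hR hmid
    exact hx₂ (this x₂)

lemma samples_eq (m : ℕ) (n : ℤ) (hm : 1 ≤ m) (E : Set ℝ)
    (hE : E ∩ Set.Ioo (n : ℝ) ((n : ℝ) + 1) = ∅) :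
    ∀ x ∈ E, |splineSeries m (cOne m n) x| = |splineSeries m (cTwo m n) x| := by
  intro x hxE
  have hx : x ∉ Set.Ioo (n : ℝ) ((n : ℝ) + 1) := by
    intro hx
    rw [Set.eq_empty_iff_forall_notMem] at hE
    exact hE x ⟨hxE, hx⟩
  rw [Set.mem_Ioo, not_and_or] at hx
  rcases hx with hx | hx
  · rw [left_eq m n hm x (not_lt.mp hx), abs_neg]
  · rw [right_eq m n hm x (not_lt.mp hx)]

/-- a global phaseless sampling set meets every open unit interval
`(n, n+1)`; specifically, if `E ∩ (n, n+1) = ∅` then the explicit pair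
`f₁ = Σ_{k≥n} φ_m(·-k) + Σ_{k≤n-m} φ_m(·-k)`, `f₂ = Σ_{k≥n} φ_m(·-k) - Σ_{k≤n-m} φ_m(·-k)`
is a counterexample to phase retrieval. -/
theorem stmt_18 (m : ℕ) (hm : 1 ≤ m) (E : Set ℝ)
    (hPS : IsGlobalPhaselessSamplingSet m E) :
    (∀ n : ℤ, (E ∩ Set.Ioo (n : ℝ) ((n : ℝ) + 1)).Nonempty) ∧
    (∀ n : ℤ, E ∩ Set.Ioo (n : ℝ) ((n : ℝ) + 1) = ∅ →
      let c₁ : ℤ → ℝ := fun k => if n ≤ k ∨ k ≤ n - m then 1 else 0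
      let c₂ : ℤ → ℝ := fun k => if n ≤ k then 1 else if k ≤ n - m then -1 else 0
      ¬ SeparableGlobal m c₁ ∧ ¬ SeparableGlobal m c₂ ∧
      (∃ x : ℝ, splineSeries m c₁ x ≠ splineSeries m c₂ x) ∧
      (∃ x : ℝ, splineSeries m c₁ x ≠ -splineSeries m c₂ x) ∧
      (∀ x : ℝ, x ≤ (n : ℝ) → splineSeries m c₁ x = -splineSeries m c₂ x) ∧
      (∀ x : ℝ, (n : ℝ) + 1 ≤ x → splineSeries m c₁ x = splineSeries m c₂ x) ∧
      (∀ x ∈ E, |splineSeries m c₁ x| = |splineSeries m c₂ x|)) := by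
  constructor
  · intro n
    rw [Set.nonempty_iff_ne_empty]
    intro hE
    rcases hPS (cOne m n) (cTwo m n) (nonsep1 m n hm) (samples_eq m n hm E hE) with H | H
    · obtain ⟨x, hx⟩ := ex1 m n hm
      exact hx (H x).symm
    · obtain ⟨x, hx⟩ := ex2 m n hm
      exact hx (by rw [H x]; ring)
  · intro n hE
    intro c₁ c₂
    exact ⟨nonsep1 m n hm, nonsep2 m n hm, ex1 m n hm, ex2 m n hm,
      left_eq m n hm, right_eq m n hm, samples_eq m n hm E hE⟩
end
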